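/- arXiv:2411.02274 — 4 statements merged into one kernel-verified Lean document; each statement's English description precedes it below -/
import Mathlib

section
/- Let a and x be elements of a C*-algebra with a a positive contraction and x a contraction. For every ε > 0 there is δ > 0 (depending only on ε) such that ‖[a, x]‖ < δ implies ‖[a^{1/2}, x]‖ < ε. -/
private lemma comm_pow_bound {B : Type*} [NormedRing B] [NormOneClass B] (a x : B)
    (ha : ‖a‖ ≤ 1) (n : ℕ) : ‖a ^ n * x - x * a ^ n‖ ≤ n * ‖a * x - x * a‖ := by
  induction n with
  | zero => simp
  | succ n ih =>
    have key : a ^ (n+1) * x - x * a ^ (n+1)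
        = a * (a ^ n * x - x * a ^ n) + (a * x - x * a) * a ^ n := by
      rw [pow_succ']
      noncomm_ring
    have hpow : ‖a ^ n‖ ≤ 1 :=
      (norm_pow_le a n).trans (pow_le_one₀ (norm_nonneg a) ha)
    have h1 : ‖a * (a ^ n * x - x * a ^ n)‖ ≤ 1 * (n * ‖a * x - x * a‖) :=
      (norm_mul_le _ _).trans (mul_le_mul ha ih (norm_nonneg _) zero_le_one)
    have h2 : ‖(a * x - x * a) * a ^ n‖ ≤ ‖a * x - x * a‖ * 1 :=
      (norm_mul_le _ _).trans (mul_le_mul_of_nonneg_left hpow (norm_nonneg _))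
    calc ‖a ^ (n+1) * x - x * a ^ (n+1)‖
        ≤ ‖a * (a ^ n * x - x * a ^ n)‖ + ‖(a * x - x * a) * a ^ n‖ := by
          rw [key]; exact norm_add_le _ _
      _ ≤ 1 * (n * ‖a * x - x * a‖) + ‖a * x - x * a‖ * 1 := add_le_add h1 h2
      _ = (n + 1 : ℕ) * ‖a * x - x * a‖ := by push_cast; ring

open Polynomial in
private lemma comm_aeval_bound {B : Type*} [NormedRing B] [NormOneClass B] [NormedAlgebra ℝ B]
    (q : ℝ[X]) (a x : B) (ha : ‖a‖ ≤ 1) :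
    ‖(aeval a q) * x - x * (aeval a q)‖ ≤
      (∑ n ∈ Finset.range (q.natDegree + 1), |q.coeff n| * n) * ‖a * x - x * a‖ := by
  rw [Polynomial.aeval_eq_sum_range]
  have key : (∑ i ∈ Finset.range (q.natDegree + 1), q.coeff i • a ^ i) * x
      - x * (∑ i ∈ Finset.range (q.natDegree + 1), q.coeff i • a ^ i)
      = ∑ i ∈ Finset.range (q.natDegree + 1), q.coeff i • (a ^ i * x - x * a ^ i) := by
    rw [Finset.sum_mul, Finset.mul_sum, ← Finset.sum_sub_distrib]
    refine Finset.sum_congr rfl fun i _ => ?_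
    rw [smul_mul_assoc, mul_smul_comm, smul_sub]
  rw [key]
  calc ‖∑ i ∈ Finset.range (q.natDegree + 1), q.coeff i • (a ^ i * x - x * a ^ i)‖
      ≤ ∑ i ∈ Finset.range (q.natDegree + 1), ‖q.coeff i • (a ^ i * x - x * a ^ i)‖ :=
        norm_sum_le _ _
    _ ≤ ∑ i ∈ Finset.range (q.natDegree + 1), |q.coeff i| * (i * ‖a * x - x * a‖) := by
        refine Finset.sum_le_sum fun i _ => ?_
        rw [norm_smul, Real.norm_eq_abs]
        exact mul_le_mul_of_nonneg_left (comm_pow_bound a x ha i) (abs_nonneg _)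
    _ = (∑ n ∈ Finset.range (q.natDegree + 1), |q.coeff n| * n) * ‖a * x - x * a‖ := by
        rw [Finset.sum_mul]
        exact Finset.sum_congr rfl fun i _ => by ring

universe u

set_option maxHeartbeats 1000000

/-- For every `ε > 0` there is `δ > 0`, depending only on `ε`, such that in any C*-algebra,
if `a` is a positive contraction and `x` a contraction with `‖[a, x]‖ < δ`, then
`‖[a^{1/2}, x]‖ < ε` (here `s` denotes the positive square root of `a`). -/
theorem commutator_sqrt_estimate {ε : ℝ} (hε : 0 < ε) :
    ∃ δ > 0, ∀ (A : Type u) (_ : NonUnitalCStarAlgebra A) (a x s : A),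
      (∃ b, a = star b * b) → ‖a‖ ≤ 1 → ‖x‖ ≤ 1 →
      (∃ c, s = star c * c) → s * s = a →
      ‖a * x - x * a‖ < δ → ‖s * x - x * s‖ < ε := by
  obtain ⟨q, hq⟩ := exists_polynomial_near_of_continuousOn 0 1 Real.sqrt
    Real.continuous_sqrt.continuousOn (ε / 4) (by positivity)
  set L := ∑ n ∈ Finset.range (q.natDegree + 1), |q.coeff n| * n with hLdef
  have hL0 : 0 ≤ L := Finset.sum_nonneg fun i _ => by positivity
  refine ⟨ε / (4 * (L + 1)), by positivity, ?_⟩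
  intro A _ a x s ha hna hnx hs hss hcomm
  let B := Unitization ℂ A
  letI : PartialOrder B := CStarAlgebra.spectralOrder B
  haveI : StarOrderedRing B := CStarAlgebra.spectralOrderedRing B
  have ha' : (0 : B) ≤ (a : B) := by
    obtain ⟨b, rfl⟩ := ha
    rw [Unitization.inr_mul, Unitization.inr_star]
    exact star_mul_self_nonneg _
  have hs' : (0 : B) ≤ (s : B) := by
    obtain ⟨c, rfl⟩ := hs
    rw [Unitization.inr_mul, Unitization.inr_star]
    exact star_mul_self_nonneg _
  have hna' : ‖(a : B)‖ ≤ 1 := by rwa [Unitization.norm_inr]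
  have hnx' : ‖(x : B)‖ ≤ 1 := by rwa [Unitization.norm_inr]
  have hss' : (s : B) * (s : B) = (a : B) := by rw [← Unitization.inr_mul, hss]
  have hsaj : IsSelfAdjoint (a : B) := .of_nonneg ha'
  have hspec : spectrum ℝ (a : B) ⊆ Set.Icc 0 1 := by
    intro t ht
    refine ⟨spectrum_nonneg_of_nonneg ha' ht, ?_⟩
    calc t ≤ |t| := le_abs_self t
      _ = ‖t‖ := (Real.norm_eq_abs t).symm
      _ ≤ ‖(a : B)‖ := spectrum.norm_le_norm_of_mem ht
      _ ≤ 1 := hna'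
  have hsa : (s : B) = cfc Real.sqrt (a : B) := by
    have h1 : CFC.sqrt (a : B) = (s : B) := CFC.sqrt_unique (A := B) hss' hs'
    have h2 : CFC.sqrt (a : B) = cfc Real.sqrt (a : B) := by
      refine CFC.sqrt_unique (A := B) ?_ ?_
      · rw [← cfc_mul _ _ (a : B) (Real.continuous_sqrt.continuousOn)
          (Real.continuous_sqrt.continuousOn)]
        calc cfc (fun y => Real.sqrt y * Real.sqrt y) (a : B)
            = cfc (id : ℝ → ℝ) (a : B) :=
              cfc_congr fun y hy => Real.mul_self_sqrt (hspec hy).1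
          _ = (a : B) := cfc_id ℝ _
      · exact cfc_nonneg fun y _ => Real.sqrt_nonneg y
    rw [← h1, h2]
  set P := Polynomial.aeval (a : B) q with hP
  have hdiff : ‖(s : B) - P‖ ≤ ε / 4 := by
    have hrw : (s : B) - P = cfc (fun y => Real.sqrt y - q.eval y) (a : B) := by
      rw [cfc_sub Real.sqrt (fun y => q.eval y) (a : B) Real.continuous_sqrt.continuousOn
        q.continuous.continuousOn, hsa, cfc_polynomial q ((a : B)) hsaj]
    rw [hrw]
    refine norm_cfc_le (by positivity) fun y hy => ?_
    rw [Real.norm_eq_abs, abs_sub_comm]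
    exact (hq y (hspec hy)).le
  have hcomm' : ‖(a : B) * (x : B) - (x : B) * (a : B)‖ < ε / (4 * (L + 1)) := by
    rw [← Unitization.inr_mul, ← Unitization.inr_mul, ← Unitization.inr_sub,
      Unitization.norm_inr]
    exact hcomm
  have hPcomm : ‖P * (x : B) - (x : B) * P‖ ≤ L * ‖(a : B) * (x : B) - (x : B) * (a : B)‖ :=
    comm_aeval_bound q _ _ hna'
  have goal' : ‖(s : B) * (x : B) - (x : B) * (s : B)‖ < ε := by
    have decomp : (s : B) * (x : B) - (x : B) * (s : B)
        = (((s : B) - P) * (x : B) - (x : B) * ((s : B) - P)) + (P * (x : B) - (x : B) * P) := by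
      noncomm_ring
    have hL1 : L * ‖(a : B) * (x : B) - (x : B) * (a : B)‖ ≤ ε / 4 := by
      have h1 : L * ‖(a : B) * (x : B) - (x : B) * (a : B)‖ ≤ L * (ε / (4 * (L + 1))) :=
        mul_le_mul_of_nonneg_left hcomm'.le hL0
      have h2 : L * (ε / (4 * (L + 1))) ≤ ε / 4 := by
        rw [← mul_div_assoc, div_le_div_iff₀ (by positivity) (by norm_num : (0:ℝ) < 4)]
        nlinarith
      linarith
    have hterm1 : ‖((s : B) - P) * (x : B)‖ ≤ ε / 4 := by
      calc ‖((s : B) - P) * (x : B)‖ ≤ ‖(s : B) - P‖ * ‖(x : B)‖ := norm_mul_le _ _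
        _ ≤ (ε / 4) * 1 := mul_le_mul hdiff hnx' (norm_nonneg _) (by positivity)
        _ = ε / 4 := mul_one _
    have hterm2 : ‖(x : B) * ((s : B) - P)‖ ≤ ε / 4 := by
      calc ‖(x : B) * ((s : B) - P)‖ ≤ ‖(x : B)‖ * ‖(s : B) - P‖ := norm_mul_le _ _
        _ ≤ 1 * (ε / 4) := mul_le_mul hnx' hdiff (norm_nonneg _) (by norm_num)
        _ = ε / 4 := one_mul _
    calc ‖(s : B) * (x : B) - (x : B) * (s : B)‖
        ≤ ‖((s : B) - P) * (x : B) - (x : B) * ((s : B) - P)‖ + ‖P * (x : B) - (x : B) * P‖ := by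
          rw [decomp]; exact norm_add_le _ _
      _ ≤ (‖((s : B) - P) * (x : B)‖ + ‖(x : B) * ((s : B) - P)‖) + ‖P * (x : B) - (x : B) * P‖ := by
          gcongr; exact norm_sub_le _ _
      _ ≤ (ε / 4 + ε / 4) + ε / 4 :=
          add_le_add (add_le_add hterm1 hterm2) (hPcomm.trans hL1)
      _ < ε := by linarith
  rwa [← Unitization.inr_mul, ← Unitization.inr_mul, ← Unitization.inr_sub,
    Unitization.norm_inr] at goal'
end

section
/- Let E be a σ-unital C*-algebra and (fₙ) a sequence of positive contractions in E with Σₙ fₙ² strictly convergent to 1_{M(E)} and fₘfₙ = 0 whenever |m − n| ≥ 2. Then for every k ∈ ℤ and every bounded sequence (aₙ) in M(E), the sum Σₙ fₙ aₙ f_{n+k} converges strictly to an element of M(E) with ‖Σₙ fₙ aₙ f_{n+k}‖ ≤ supₙ ‖aₙ‖, and moreover the image of this element in the corona Q(E) = M(E)/E has norm at most limsupₙ ‖aₙ‖. -/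
open scoped MultiplierAlgebra
open Filter

set_option synthInstance.maxHeartbeats 1000000
set_option maxHeartbeats 1000000

/-- Strict convergence of a sequence in the multiplier algebra `𝓜(ℂ, E)`. -/
def StrictTendsto {E : Type*} [NonUnitalCStarAlgebra E]
    (s : ℕ → 𝓜(ℂ, E)) (T : 𝓜(ℂ, E)) : Prop :=
  ∀ a : E, Tendsto (fun n => ‖(s n - T) * (a : 𝓜(ℂ, E))‖) atTop (nhds 0) ∧
    Tendsto (fun n => ‖(a : 𝓜(ℂ, E)) * (s n - T)‖) atTop (nhds 0)

/-- A countable approximate unit of positive contractions (σ-unitality witness). -/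
def IsApproxUnit {E : Type*} [NonUnitalCStarAlgebra E] (e : ℕ → E) : Prop :=
  (∀ n, (∃ b, e n = star b * b) ∧ ‖e n‖ ≤ 1) ∧
  ∀ x : E, Tendsto (fun n => ‖e n * x - x‖) atTop (nhds 0) ∧
    Tendsto (fun n => ‖x * e n - x‖) atTop (nhds 0)

namespace StrictAux
variable {E : Type*} [NonUnitalCStarAlgebra E]
noncomputable local instance : PartialOrder 𝓜(ℂ, E) := CStarAlgebra.spectralOrder _
local instance : StarOrderedRing 𝓜(ℂ, E) := CStarAlgebra.spectralOrderedRing _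

lemma norm_coe (b : E) : ‖(b : 𝓜(ℂ, E))‖ = ‖b‖ := by
  rw [← DoubleCentralizer.norm_fst, DoubleCentralizer.coe_fst,
    ContinuousLinearMap.opNorm_mul_apply]

lemma coe_mul (b c : E) : ((b * c : E) : 𝓜(ℂ,E)) = (b : 𝓜(ℂ,E)) * c :=
  map_mul (DoubleCentralizer.coeHom : E →⋆ₙₐ[ℂ] 𝓜(ℂ, E)) b c

lemma coe_star (b : E) : ((star b : E) : 𝓜(ℂ,E)) = star (b : 𝓜(ℂ,E)) :=
  map_star (DoubleCentralizer.coeHom : E →⋆ₙₐ[ℂ] 𝓜(ℂ, E)) b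

lemma coe_sum {ι : Type*} (s : Finset ι) (v : ι → E) :
    ((∑ i ∈ s, v i : E) : 𝓜(ℂ,E)) = ∑ i ∈ s, (v i : 𝓜(ℂ,E)) :=
  map_sum (DoubleCentralizer.coeHom : E →⋆ₙₐ[ℂ] 𝓜(ℂ, E)) v s

/-- left approximate-unit cancellation -/
lemma left_cancel (u : ℕ → E)
    (hu : ∀ x : E, Tendsto (fun n => ‖u n * x - x‖) atTop (nhds 0))
    {x y : E} (h : ∀ n, u n * x = u n * y) : x = y := by
  have hx : Tendsto (fun n => u n * x) atTop (nhds x) := by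
    rw [tendsto_iff_norm_sub_tendsto_zero]; exact hu x
  have hy : Tendsto (fun n => u n * x) atTop (nhds y) := by
    rw [funext h, tendsto_iff_norm_sub_tendsto_zero]; exact hu y
  exact tendsto_nhds_unique hx hy

lemma right_cancel (u : ℕ → E)
    (hu : ∀ x : E, Tendsto (fun n => ‖x * u n - x‖) atTop (nhds 0))
    {x y : E} (h : ∀ n, x * u n = y * u n) : x = y := by
  have hx : Tendsto (fun n => x * u n) atTop (nhds x) := by
    rw [tendsto_iff_norm_sub_tendsto_zero]; exact hu x
  have hy : Tendsto (fun n => x * u n) atTop (nhds y) := by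
    rw [funext h, tendsto_iff_norm_sub_tendsto_zero]; exact hu y
  exact tendsto_nhds_unique hx hy

variable (u : ℕ → E)

lemma fst_mul_right (huL : ∀ x : E, Tendsto (fun n => ‖u n * x - x‖) atTop (nhds 0)) (T : 𝓜(ℂ,E)) (b c : E) : T.fst (b * c) = T.fst b * c := by
  refine left_cancel u huL fun n => ?_
  calc u n * T.fst (b * c) = T.snd (u n) * (b * c) := (T.central (u n) (b*c)).symm
    _ = (T.snd (u n) * b) * c := (mul_assoc _ _ _).symm
    _ = (u n * T.fst b) * c := by rw [T.central (u n) b]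
    _ = u n * (T.fst b * c) := mul_assoc _ _ _

lemma snd_mul_left (huR : ∀ x : E, Tendsto (fun n => ‖x * u n - x‖) atTop (nhds 0)) (T : 𝓜(ℂ,E)) (b c : E) : T.snd (c * b) = c * T.snd b := by
  refine right_cancel u huR fun n => ?_
  calc T.snd (c * b) * u n = (c * b) * T.fst (u n) := T.central _ _
    _ = c * (b * T.fst (u n)) := mul_assoc _ _ _
    _ = c * (T.snd b * u n) := by rw [T.central b (u n)]
    _ = (c * T.snd b) * u n := (mul_assoc _ _ _).symm

lemma mul_coe (huL : ∀ x : E, Tendsto (fun n => ‖u n * x - x‖) atTop (nhds 0)) (T : 𝓜(ℂ,E)) (b : E) : T * (b : 𝓜(ℂ,E)) = ((T.fst b : E) : 𝓜(ℂ,E)) := by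
  refine DoubleCentralizer.ext _ _ _ _ (Prod.ext ?_ ?_)
  · refine ContinuousLinearMap.ext fun c => ?_
    show T.fst (b * c) = T.fst b * c
    exact fst_mul_right u huL T b c
  · refine ContinuousLinearMap.ext fun c => ?_
    show T.snd c * b = c * T.fst b
    exact T.central c b

lemma coe_mul' (huR : ∀ x : E, Tendsto (fun n => ‖x * u n - x‖) atTop (nhds 0)) (T : 𝓜(ℂ,E)) (b : E) : (b : 𝓜(ℂ,E)) * T = ((T.snd b : E) : 𝓜(ℂ,E)) := by
  refine DoubleCentralizer.ext _ _ _ _ (Prod.ext ?_ ?_)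
  · refine ContinuousLinearMap.ext fun c => ?_
    show b * T.fst c = T.snd b * c
    exact (T.central b c).symm
  · refine ContinuousLinearMap.ext fun c => ?_
    show T.snd (c * b) = c * T.snd b
    exact snd_mul_left u huR T b c

lemma rsmul_nonneg {c : ℝ} (hc : 0 ≤ c) {p : 𝓜(ℂ,E)} (hp : 0 ≤ p) : 0 ≤ c • p := by
  rw [StarOrderedRing.nonneg_iff] at hp ⊢
  induction hp using AddSubmonoid.closure_induction with
  | mem x hx =>
    obtain ⟨s, rfl⟩ := hx
    apply AddSubmonoid.subset_closure
    refine ⟨Real.sqrt c • s, ?_⟩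
    show star (Real.sqrt c • s) * (Real.sqrt c • s) = c • (star s * s)
    rw [star_smul, star_trivial, smul_mul_smul_comm, Real.mul_self_sqrt hc]
  | zero => simpa using (AddSubmonoid.closure _).zero_mem
  | add x y _ _ hx hy => rw [smul_add]; exact (AddSubmonoid.closure _).add_mem hx hy

lemma rsmul_mono {c : ℝ} (hc : 0 ≤ c) {p q : 𝓜(ℂ,E)} (hpq : p ≤ q) : c • p ≤ c • q := by
  rw [← sub_nonneg, ← smul_sub]
  exact rsmul_nonneg hc (sub_nonneg.mpr hpq)

lemma amgm (p q : 𝓜(ℂ,E)) {t : ℝ} (ht : 0 < t) :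
    star p * q + star q * p ≤ t • (star p * p) + t⁻¹ • (star q * q) := by
  have h := star_mul_self_nonneg (Real.sqrt t • p - (Real.sqrt t)⁻¹ • q)
  rw [← sub_nonneg]
  have hs : Real.sqrt t ≠ 0 := by positivity
  have hinv : (Real.sqrt t)⁻¹ * (Real.sqrt t)⁻¹ = t⁻¹ := by
    rw [← mul_inv, Real.mul_self_sqrt ht.le]
  have key : star (Real.sqrt t • p - (Real.sqrt t)⁻¹ • q) *
      (Real.sqrt t • p - (Real.sqrt t)⁻¹ • q) =
      t • (star p * p) + t⁻¹ • (star q * q) - (star p * q + star q * p) := by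
    simp only [star_sub, star_smul, star_trivial, sub_mul, mul_sub, smul_mul_smul_comm,
      Real.mul_self_sqrt ht.le, inv_mul_cancel₀ hs, mul_inv_cancel₀ hs, hinv, one_smul]
    abel
  rw [key] at h
  exact h

/-- Cauchy–Schwarz for finite sums in the multiplier algebra. -/
lemma cs {ι : Type*} (s : Finset ι) (x y : ι → 𝓜(ℂ,E)) :
    ‖∑ i ∈ s, x i * y i‖ ^ 2 ≤
      ‖∑ i ∈ s, x i * star (x i)‖ * ‖∑ i ∈ s, star (y i) * y i‖ := by
  set S := ∑ i ∈ s, x i * y i with hS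
  set X := ∑ i ∈ s, x i * star (x i) with hX
  set Y := ∑ i ∈ s, star (y i) * y i with hY
  have hXsa : IsSelfAdjoint X := by
    rw [IsSelfAdjoint, hX, star_sum]
    exact Finset.sum_congr rfl fun i _ => by rw [star_mul, star_star]
  have hSnn : (0:𝓜(ℂ,E)) ≤ star S * S := star_mul_self_nonneg _
  have step : ∀ t : ℝ, 0 < t →
      2 * ‖S‖^2 ≤ t * ‖Y‖ + t⁻¹ * (‖X‖ * ‖S‖^2) := by
    intro t ht
    have key : star S * S + star S * S ≤ t • Y + t⁻¹ • (star S * X * S) := by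
      have e1 : star S * S + star S * S =
          ∑ i ∈ s, (star (y i) * (star (x i) * S) + star (star (x i) * S) * (y i)) := by
        calc star S * S + star S * S
            = (∑ i ∈ s, star (x i * y i)) * S + star S * ∑ i ∈ s, (x i * y i) := by
              rw [← star_sum, hS]
          _ = ∑ i ∈ s, (star (x i * y i) * S) + ∑ i ∈ s, (star S * (x i * y i)) := by
              rw [Finset.sum_mul, Finset.mul_sum]
          _ = _ := by
              rw [← Finset.sum_add_distrib]
              refine Finset.sum_congr rfl fun i _ => ?_
              rw [star_mul (x i) (y i), mul_assoc, star_mul (star (x i)) S, star_star, mul_assoc]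
      have e2 : t • Y + t⁻¹ • (star S * X * S) =
          ∑ i ∈ s, (t • (star (y i) * y i) +
            t⁻¹ • (star (star (x i) * S) * (star (x i) * S))) := by
        rw [Finset.sum_add_distrib, ← Finset.smul_sum, ← Finset.smul_sum, ← hY]
        congr 2
        rw [hX, mul_assoc, Finset.sum_mul, Finset.mul_sum]
        refine Finset.sum_congr rfl fun i _ => ?_
        rw [star_mul (star (x i)) S, star_star]
        simp only [mul_assoc]
      rw [e1, e2]
      exact Finset.sum_le_sum fun i _ => amgm (y i) (star (x i) * S) ht
    have key2 : star S * S + star S * S ≤ t • Y + t⁻¹ • (‖X‖ • (star S * S)) :=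
      key.trans (add_le_add_right
        (rsmul_mono (inv_pos.mpr ht).le (CStarAlgebra.star_left_conjugate_le_norm_smul hXsa)) _)
    have hnorm : ‖star S * S + star S * S‖ ≤ ‖t • Y + t⁻¹ • (‖X‖ • (star S * S))‖ :=
      CStarAlgebra.norm_le_norm_of_nonneg_of_le (add_nonneg hSnn hSnn) key2
    have hL : 2 * ‖S‖^2 ≤ ‖star S * S + star S * S‖ := by
      have h2 : star S * S + star S * S = (2:ℝ) • (star S * S) := by
        rw [two_smul]
      rw [h2, norm_smul]
      simp [CStarRing.norm_star_mul_self, sq]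
    have hR : ‖t • Y + t⁻¹ • (‖X‖ • (star S * S))‖ ≤ t * ‖Y‖ + t⁻¹ * (‖X‖ * ‖S‖^2) := by
      refine (norm_add_le _ _).trans ?_
      rw [norm_smul, norm_smul, norm_smul]
      simp only [Real.norm_eq_abs, abs_of_pos ht, abs_of_pos (inv_pos.mpr ht),
        abs_of_nonneg (norm_nonneg X), CStarRing.norm_star_mul_self]
      rw [sq]
    linarith
  refine le_of_forall_pos_le_add fun ε hε => ?_
  have hYnn' : (0:ℝ) ≤ ‖Y‖ := norm_nonneg _
  have hXnn' : (0:ℝ) ≤ ‖X‖ := norm_nonneg _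
  set δ : ℝ := ε / (‖Y‖ + 1) with hδ
  have hδpos : 0 < δ := by positivity
  have h := step (‖X‖ + δ) (by positivity)
  have hfrac : (‖X‖ + δ)⁻¹ * ‖X‖ ≤ 1 := by
    rw [inv_mul_le_iff₀ (by positivity), mul_one]
    linarith
  have h2 : (‖X‖ + δ)⁻¹ * (‖X‖ * ‖S‖^2) ≤ ‖S‖^2 := by
    rw [← mul_assoc]
    calc (‖X‖ + δ)⁻¹ * ‖X‖ * ‖S‖^2 ≤ 1 * ‖S‖^2 :=
          mul_le_mul_of_nonneg_right hfrac (by positivity)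
      _ = ‖S‖^2 := one_mul _
  have h3 : ‖S‖^2 ≤ (‖X‖ + δ) * ‖Y‖ := by linarith
  have h4 : δ * ‖Y‖ ≤ ε := by
    rw [hδ, div_mul_eq_mul_div, div_le_iff₀ (by positivity)]
    nlinarith
  nlinarith

section P
variable (u : ℕ → E) (f : ℕ → E)

lemma star_coe_eq (hsa : star (f 0) = f 0) : star ((f 0 : E) : 𝓜(ℂ,E)) = (f 0 : E) := by
  rw [← coe_star, hsa]

lemma sq_coe_nonneg {b : E} (hsa : star b = b) : 0 ≤ (b : 𝓜(ℂ,E)) * (b : 𝓜(ℂ,E)) := by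
  have : (b : 𝓜(ℂ,E)) * b = star (b : 𝓜(ℂ,E)) * b := by rw [← coe_star, hsa]
  rw [this]
  exact star_mul_self_nonneg _

lemma normP
    (huL : ∀ x : E, Tendsto (fun n => ‖u n * x - x‖) atTop (nhds 0))
    (hfsa : ∀ n, star (f n) = f n)
    (hsum1 : ∀ e : E, Tendsto
      (fun N => ((∑ n ∈ Finset.range N, f n * f n : E) : 𝓜(ℂ,E)) * (e : 𝓜(ℂ,E)))
      atTop (nhds (e : 𝓜(ℂ,E))))
    (s : Finset ℕ) :
    ‖∑ n ∈ s, (f n : 𝓜(ℂ,E)) * (f n : 𝓜(ℂ,E))‖ ≤ 1 := by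
  set Sc : Finset ℕ → 𝓜(ℂ,E) := fun t => ∑ n ∈ t, (f n : 𝓜(ℂ,E)) * (f n : 𝓜(ℂ,E)) with hSc
  have hScnn : ∀ t, (0:𝓜(ℂ,E)) ≤ Sc t := fun t =>
    Finset.sum_nonneg fun n _ => sq_coe_nonneg (hfsa n)
  have hmono : ∀ ⦃t t' : Finset ℕ⦄, t ⊆ t' → Sc t ≤ Sc t' := fun t t' h =>
    Finset.sum_le_sum_of_subset_of_nonneg h fun n _ _ => sq_coe_nonneg (hfsa n)
  have hcoe : ∀ N, ((∑ n ∈ Finset.range N, f n * f n : E) : 𝓜(ℂ,E)) = Sc (Finset.range N) := by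
    intro N
    rw [coe_sum]
    exact Finset.sum_congr rfl fun n _ => coe_mul _ _
  have key1 : ∀ N, ‖Sc (Finset.range N)‖ ≤ 1 := by
    intro N
    set d : 𝓜(ℂ,E) := CFC.sqrt (Sc (Finset.range N)) with hd
    have hd0 : 0 ≤ d := CFC.sqrt_nonneg _
    have hdd : d * d = Sc (Finset.range N) := CFC.sqrt_mul_sqrt_self _ (hScnn _)
    have hdsa : star d = d := hd0.isSelfAdjoint.star_eq
    have hkey : ∀ e : E, ‖d * (e : 𝓜(ℂ,E))‖ ≤ ‖e‖ := by
      intro e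
      have hfact : star ((e : 𝓜(ℂ,E))) * Sc (Finset.range N) * e =
          star (d * (e : 𝓜(ℂ,E))) * (d * (e : 𝓜(ℂ,E))) := by
        rw [← hdd, star_mul, hdsa]; noncomm_ring
      have h1 : ‖d * (e : 𝓜(ℂ,E))‖^2 = ‖star ((e : 𝓜(ℂ,E))) * Sc (Finset.range N) * e‖ := by
        rw [sq, ← CStarRing.norm_star_mul_self (x := d * (e : 𝓜(ℂ,E))), hfact]
      have hle : star ((e : 𝓜(ℂ,E))) * Sc (Finset.range N) * e ≤
          star ((e : 𝓜(ℂ,E))) * (e : 𝓜(ℂ,E)) := by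
        have hev : ∀ P ≥ N, star ((e : 𝓜(ℂ,E))) * Sc (Finset.range N) * e ≤
            star ((e : 𝓜(ℂ,E))) * Sc (Finset.range P) * e :=
          fun P hP => star_left_conjugate_le_conjugate
            (hmono (Finset.range_subset_range.mpr hP)) _
        have htend : Tendsto (fun P => star ((e : 𝓜(ℂ,E))) * Sc (Finset.range P) * e)
            atTop (nhds (star ((e : 𝓜(ℂ,E))) * (e : 𝓜(ℂ,E)))) := by
          have h2 : Tendsto (fun P => Sc (Finset.range P) * (e : 𝓜(ℂ,E))) atTop
              (nhds ((e : 𝓜(ℂ,E)))) := by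
            simpa only [hcoe] using hsum1 e
          have := (tendsto_const_nhds (x := star ((e : 𝓜(ℂ,E)))) (f := atTop (α := ℕ))).mul h2
          simpa only [mul_assoc] using this
        exact ge_of_tendsto htend (eventually_atTop.mpr ⟨N, hev⟩)
      have hnn : (0:𝓜(ℂ,E)) ≤ star ((e : 𝓜(ℂ,E))) * Sc (Finset.range N) * e := by
        rw [hfact]; exact star_mul_self_nonneg _
      have h3 : ‖star ((e : 𝓜(ℂ,E))) * Sc (Finset.range N) * e‖ ≤ ‖e‖^2 := by
        refine (CStarAlgebra.norm_le_norm_of_nonneg_of_le hnn hle).trans ?_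
        rw [CStarRing.norm_star_mul_self, norm_coe, sq]
      have h4 : ‖d * (e : 𝓜(ℂ,E))‖^2 ≤ ‖e‖^2 := h1 ▸ h3
      nlinarith [h4, norm_nonneg (d * (e : 𝓜(ℂ,E))), norm_nonneg e]
    have hdnorm : ‖d‖ ≤ 1 := by
      rw [← DoubleCentralizer.norm_fst]
      refine ContinuousLinearMap.opNorm_le_bound _ zero_le_one fun e => ?_
      rw [one_mul, ← norm_coe, ← mul_coe u huL]
      exact hkey e
    calc ‖Sc (Finset.range N)‖ = ‖d * d‖ := by rw [hdd]
      _ ≤ ‖d‖ * ‖d‖ := norm_mul_le _ _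
      _ ≤ 1 * 1 := mul_le_mul hdnorm hdnorm (norm_nonneg _) zero_le_one
      _ = 1 := one_mul 1
  have hsub : s ⊆ Finset.range (s.sup id + 1) := fun n hn =>
    Finset.mem_range.mpr (Nat.lt_succ_of_le (Finset.le_sup (f := id) hn))
  exact (CStarAlgebra.norm_le_norm_of_nonneg_of_le (hScnn s) (hmono hsub)).trans
    (key1 (s.sup id + 1))

end P
lemma smul_le_smul_right' {c₁ c₂ : ℝ} (h : c₁ ≤ c₂) {p : 𝓜(ℂ,E)} (hp : 0 ≤ p) :
    c₁ • p ≤ c₂ • p := by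
  rw [← sub_nonneg, ← sub_smul]
  exact rsmul_nonneg (sub_nonneg.mpr h) hp

section bounds
variable (f g : ℕ → E) (a : ℕ → 𝓜(ℂ,E))

/-- the key `x`-side estimate -/
lemma Xbound (hfsa : ∀ n, star ((f n : E) : 𝓜(ℂ,E)) = ((f n : E) : 𝓜(ℂ,E)))
    (hfsq : ∀ n, (0:𝓜(ℂ,E)) ≤ (f n : 𝓜(ℂ,E)) * (f n : 𝓜(ℂ,E)))
    (hPf : ∀ s : Finset ℕ, ‖∑ n ∈ s, (f n : 𝓜(ℂ,E)) * (f n : 𝓜(ℂ,E))‖ ≤ 1)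
    (C : ℝ) (hC : 0 ≤ C) (s : Finset ℕ) (hCa : ∀ n ∈ s, ‖a n‖ ≤ C) :
    ‖∑ n ∈ s, ((f n : 𝓜(ℂ,E)) * a n) * star ((f n : 𝓜(ℂ,E)) * a n)‖ ≤ C^2 := by
  have hterm : ∀ n ∈ s, ((f n : 𝓜(ℂ,E)) * a n) * star ((f n : 𝓜(ℂ,E)) * a n) ≤
      C^2 • ((f n : 𝓜(ℂ,E)) * (f n : 𝓜(ℂ,E))) := by
    intro n hn
    have h1 : ((f n : 𝓜(ℂ,E)) * a n) * star ((f n : 𝓜(ℂ,E)) * a n) =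
        (f n : 𝓜(ℂ,E)) * (a n * star (a n)) * star ((f n : 𝓜(ℂ,E))) := by
      rw [star_mul]; noncomm_ring
    have h2 := CStarAlgebra.star_right_conjugate_le_norm_smul
      (a := ((f n : E) : 𝓜(ℂ,E))) (b := a n * star (a n))
      (IsSelfAdjoint.mul_star_self (a n))
    rw [hfsa n] at h2
    have h3 : ‖a n * star (a n)‖ ≤ C^2 := by
      calc ‖a n * star (a n)‖ ≤ ‖a n‖ * ‖star (a n)‖ := norm_mul_le _ _
        _ = ‖a n‖ * ‖a n‖ := by rw [norm_star]
        _ ≤ C * C := mul_le_mul (hCa n hn) (hCa n hn) (norm_nonneg _) hC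
        _ = C^2 := (sq C).symm
    calc ((f n : 𝓜(ℂ,E)) * a n) * star ((f n : 𝓜(ℂ,E)) * a n)
        = (f n : 𝓜(ℂ,E)) * (a n * star (a n)) * star ((f n : 𝓜(ℂ,E))) := h1
      _ = (f n : 𝓜(ℂ,E)) * (a n * star (a n)) * (f n : 𝓜(ℂ,E)) := by rw [hfsa n]
      _ ≤ ‖a n * star (a n)‖ • ((f n : 𝓜(ℂ,E)) * (f n : 𝓜(ℂ,E))) := h2
      _ ≤ C^2 • ((f n : 𝓜(ℂ,E)) * (f n : 𝓜(ℂ,E))) := smul_le_smul_right' h3 (hfsq n)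
  have hsum : ∑ n ∈ s, ((f n : 𝓜(ℂ,E)) * a n) * star ((f n : 𝓜(ℂ,E)) * a n) ≤
      C^2 • (∑ n ∈ s, (f n : 𝓜(ℂ,E)) * (f n : 𝓜(ℂ,E))) := by
    rw [Finset.smul_sum]
    exact Finset.sum_le_sum hterm
  have hnn : (0:𝓜(ℂ,E)) ≤ ∑ n ∈ s, ((f n : 𝓜(ℂ,E)) * a n) * star ((f n : 𝓜(ℂ,E)) * a n) :=
    Finset.sum_nonneg fun n _ => mul_star_self_nonneg _
  calc ‖∑ n ∈ s, ((f n : 𝓜(ℂ,E)) * a n) * star ((f n : 𝓜(ℂ,E)) * a n)‖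
      ≤ ‖C^2 • (∑ n ∈ s, (f n : 𝓜(ℂ,E)) * (f n : 𝓜(ℂ,E)))‖ :=
        CStarAlgebra.norm_le_norm_of_nonneg_of_le hnn hsum
    _ = C^2 * ‖∑ n ∈ s, (f n : 𝓜(ℂ,E)) * (f n : 𝓜(ℂ,E))‖ := by
        rw [norm_smul, Real.norm_eq_abs, abs_of_nonneg (by positivity)]
    _ ≤ C^2 * 1 := by
        exact mul_le_mul_of_nonneg_left (hPf s) (by positivity)
    _ = C^2 := mul_one _

lemma bound_i (hfsa : ∀ n, star ((f n : E) : 𝓜(ℂ,E)) = ((f n : E) : 𝓜(ℂ,E)))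
    (hgsa : ∀ n, star ((g n : E) : 𝓜(ℂ,E)) = ((g n : E) : 𝓜(ℂ,E)))
    (hfsq : ∀ n, (0:𝓜(ℂ,E)) ≤ (f n : 𝓜(ℂ,E)) * (f n : 𝓜(ℂ,E)))
    (hPf : ∀ s : Finset ℕ, ‖∑ n ∈ s, (f n : 𝓜(ℂ,E)) * (f n : 𝓜(ℂ,E))‖ ≤ 1)
    (hPg : ∀ s : Finset ℕ, ‖∑ n ∈ s, (g n : 𝓜(ℂ,E)) * (g n : 𝓜(ℂ,E))‖ ≤ 1)
    (C : ℝ) (hC : 0 ≤ C) (s : Finset ℕ) (hCa : ∀ n ∈ s, ‖a n‖ ≤ C) :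
    ‖∑ n ∈ s, (f n : 𝓜(ℂ,E)) * a n * (g n : 𝓜(ℂ,E))‖ ≤ C := by
  have h := cs s (fun n => (f n : 𝓜(ℂ,E)) * a n) (fun n => (g n : 𝓜(ℂ,E)))
  have hx := Xbound f a hfsa hfsq hPf C hC s hCa
  have hy : ‖∑ n ∈ s, star ((g n : E) : 𝓜(ℂ,E)) * (g n : 𝓜(ℂ,E))‖ ≤ 1 := by
    have : ∀ n, star ((g n : E) : 𝓜(ℂ,E)) * (g n : 𝓜(ℂ,E)) =
        (g n : 𝓜(ℂ,E)) * (g n : 𝓜(ℂ,E)) := fun n => by rw [hgsa n]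
    rw [Finset.sum_congr rfl fun n _ => this n]
    exact hPg s
  have h2 : ‖∑ n ∈ s, (f n : 𝓜(ℂ,E)) * a n * (g n : 𝓜(ℂ,E))‖^2 ≤ C^2 := by
    calc ‖∑ n ∈ s, (f n : 𝓜(ℂ,E)) * a n * (g n : 𝓜(ℂ,E))‖^2
        ≤ ‖∑ n ∈ s, ((f n : 𝓜(ℂ,E)) * a n) * star ((f n : 𝓜(ℂ,E)) * a n)‖ *
          ‖∑ n ∈ s, star ((g n : E) : 𝓜(ℂ,E)) * (g n : 𝓜(ℂ,E))‖ := h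
      _ ≤ C^2 * 1 := mul_le_mul hx hy (norm_nonneg _) (by positivity)
      _ = C^2 := mul_one _
  nlinarith [norm_nonneg (∑ n ∈ s, (f n : 𝓜(ℂ,E)) * a n * (g n : 𝓜(ℂ,E)))]

end bounds
section bounds
variable (f g : ℕ → E) (a : ℕ → 𝓜(ℂ,E))

lemma bound_iiL (hfsa : ∀ n, star ((f n : E) : 𝓜(ℂ,E)) = ((f n : E) : 𝓜(ℂ,E)))
    (hgsa : ∀ n, star ((g n : E) : 𝓜(ℂ,E)) = ((g n : E) : 𝓜(ℂ,E)))
    (hfsq : ∀ n, (0:𝓜(ℂ,E)) ≤ (f n : 𝓜(ℂ,E)) * (f n : 𝓜(ℂ,E)))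
    (hPf : ∀ s : Finset ℕ, ‖∑ n ∈ s, (f n : 𝓜(ℂ,E)) * (f n : 𝓜(ℂ,E))‖ ≤ 1)
    (C : ℝ) (hC : 0 ≤ C) (s : Finset ℕ) (hCa : ∀ n ∈ s, ‖a n‖ ≤ C) (e : E) :
    ‖(∑ n ∈ s, (f n : 𝓜(ℂ,E)) * a n * (g n : 𝓜(ℂ,E))) * (e : 𝓜(ℂ,E))‖^2 ≤
      C^2 * (‖e‖ * ‖(∑ n ∈ s, (g n : 𝓜(ℂ,E)) * (g n : 𝓜(ℂ,E))) * (e : 𝓜(ℂ,E))‖) := by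
  have h := cs s (fun n => (f n : 𝓜(ℂ,E)) * a n) (fun n => (g n : 𝓜(ℂ,E)) * (e : 𝓜(ℂ,E)))
  have hsum : ∑ n ∈ s, ((f n : 𝓜(ℂ,E)) * a n) * ((g n : 𝓜(ℂ,E)) * (e : 𝓜(ℂ,E))) =
      (∑ n ∈ s, (f n : 𝓜(ℂ,E)) * a n * (g n : 𝓜(ℂ,E))) * (e : 𝓜(ℂ,E)) := by
    rw [Finset.sum_mul]
    exact Finset.sum_congr rfl fun n _ => by noncomm_ring
  rw [hsum] at h
  have hx := Xbound f a hfsa hfsq hPf C hC s hCa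
  have hyeq : ∑ n ∈ s, star ((g n : 𝓜(ℂ,E)) * (e : 𝓜(ℂ,E))) * ((g n : 𝓜(ℂ,E)) * (e : 𝓜(ℂ,E))) =
      star ((e : 𝓜(ℂ,E))) * ((∑ n ∈ s, (g n : 𝓜(ℂ,E)) * (g n : 𝓜(ℂ,E))) * (e : 𝓜(ℂ,E))) := by
    rw [Finset.sum_mul, Finset.mul_sum]
    refine Finset.sum_congr rfl fun n _ => ?_
    rw [star_mul, hgsa n]
    noncomm_ring
  have hy : ‖∑ n ∈ s, star ((g n : 𝓜(ℂ,E)) * (e : 𝓜(ℂ,E))) *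
      ((g n : 𝓜(ℂ,E)) * (e : 𝓜(ℂ,E)))‖ ≤
      ‖e‖ * ‖(∑ n ∈ s, (g n : 𝓜(ℂ,E)) * (g n : 𝓜(ℂ,E))) * (e : 𝓜(ℂ,E))‖ := by
    rw [hyeq]
    calc ‖star ((e : 𝓜(ℂ,E))) * ((∑ n ∈ s, (g n : 𝓜(ℂ,E)) * (g n : 𝓜(ℂ,E))) * (e : 𝓜(ℂ,E)))‖
        ≤ ‖star ((e : 𝓜(ℂ,E)))‖ * ‖(∑ n ∈ s, (g n : 𝓜(ℂ,E)) * (g n : 𝓜(ℂ,E))) * (e : 𝓜(ℂ,E))‖ :=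
          norm_mul_le _ _
      _ = ‖e‖ * ‖(∑ n ∈ s, (g n : 𝓜(ℂ,E)) * (g n : 𝓜(ℂ,E))) * (e : 𝓜(ℂ,E))‖ := by
          rw [norm_star, norm_coe]
  calc ‖(∑ n ∈ s, (f n : 𝓜(ℂ,E)) * a n * (g n : 𝓜(ℂ,E))) * (e : 𝓜(ℂ,E))‖^2
      ≤ ‖∑ n ∈ s, ((f n : 𝓜(ℂ,E)) * a n) * star ((f n : 𝓜(ℂ,E)) * a n)‖ *
        ‖∑ n ∈ s, star ((g n : 𝓜(ℂ,E)) * (e : 𝓜(ℂ,E))) * ((g n : 𝓜(ℂ,E)) * (e : 𝓜(ℂ,E)))‖ := h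
    _ ≤ C^2 * (‖e‖ * ‖(∑ n ∈ s, (g n : 𝓜(ℂ,E)) * (g n : 𝓜(ℂ,E))) * (e : 𝓜(ℂ,E))‖) :=
        mul_le_mul hx hy (norm_nonneg _) (by positivity)

lemma bound_iiR (hfsa : ∀ n, star ((f n : E) : 𝓜(ℂ,E)) = ((f n : E) : 𝓜(ℂ,E)))
    (hgsa : ∀ n, star ((g n : E) : 𝓜(ℂ,E)) = ((g n : E) : 𝓜(ℂ,E)))
    (hfsq : ∀ n, (0:𝓜(ℂ,E)) ≤ (f n : 𝓜(ℂ,E)) * (f n : 𝓜(ℂ,E)))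
    (hPg : ∀ s : Finset ℕ, ‖∑ n ∈ s, (g n : 𝓜(ℂ,E)) * (g n : 𝓜(ℂ,E))‖ ≤ 1)
    (C : ℝ) (hC : 0 ≤ C) (s : Finset ℕ) (hCa : ∀ n ∈ s, ‖a n‖ ≤ C) (e : E) :
    ‖(e : 𝓜(ℂ,E)) * (∑ n ∈ s, (f n : 𝓜(ℂ,E)) * a n * (g n : 𝓜(ℂ,E)))‖^2 ≤
      C^2 * (‖e‖ * ‖(e : 𝓜(ℂ,E)) * (∑ n ∈ s, (f n : 𝓜(ℂ,E)) * (f n : 𝓜(ℂ,E)))‖) := by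
  have h := cs s (fun n => (e : 𝓜(ℂ,E)) * ((f n : 𝓜(ℂ,E)) * a n)) (fun n => (g n : 𝓜(ℂ,E)))
  have hsum : ∑ n ∈ s, ((e : 𝓜(ℂ,E)) * ((f n : 𝓜(ℂ,E)) * a n)) * (g n : 𝓜(ℂ,E)) =
      (e : 𝓜(ℂ,E)) * (∑ n ∈ s, (f n : 𝓜(ℂ,E)) * a n * (g n : 𝓜(ℂ,E))) := by
    rw [Finset.mul_sum]
    exact Finset.sum_congr rfl fun n _ => by noncomm_ring
  rw [hsum] at h
  have hxterm : ∀ n ∈ s, ((e : 𝓜(ℂ,E)) * ((f n : 𝓜(ℂ,E)) * a n)) *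
      star ((e : 𝓜(ℂ,E)) * ((f n : 𝓜(ℂ,E)) * a n)) ≤
      C^2 • ((e : 𝓜(ℂ,E)) * ((f n : 𝓜(ℂ,E)) * (f n : 𝓜(ℂ,E))) * star ((e : 𝓜(ℂ,E)))) := by
    intro n hn
    have h1 : ((e : 𝓜(ℂ,E)) * ((f n : 𝓜(ℂ,E)) * a n)) *
        star ((e : 𝓜(ℂ,E)) * ((f n : 𝓜(ℂ,E)) * a n)) =
        ((e : 𝓜(ℂ,E)) * (f n : 𝓜(ℂ,E))) * (a n * star (a n)) *
          star ((e : 𝓜(ℂ,E)) * (f n : 𝓜(ℂ,E))) := by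
      rw [star_mul, star_mul, star_mul]
      noncomm_ring
    have h2 := CStarAlgebra.star_right_conjugate_le_norm_smul
      (a := (e : 𝓜(ℂ,E)) * (f n : 𝓜(ℂ,E))) (b := a n * star (a n))
      (IsSelfAdjoint.mul_star_self (a n))
    have h3 : ‖a n * star (a n)‖ ≤ C^2 := by
      calc ‖a n * star (a n)‖ ≤ ‖a n‖ * ‖star (a n)‖ := norm_mul_le _ _
        _ = ‖a n‖ * ‖a n‖ := by rw [norm_star]
        _ ≤ C * C := mul_le_mul (hCa n hn) (hCa n hn) (norm_nonneg _) hC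
        _ = C^2 := (sq C).symm
    have h4 : ((e : 𝓜(ℂ,E)) * (f n : 𝓜(ℂ,E))) * star ((e : 𝓜(ℂ,E)) * (f n : 𝓜(ℂ,E))) =
        (e : 𝓜(ℂ,E)) * ((f n : 𝓜(ℂ,E)) * (f n : 𝓜(ℂ,E))) * star ((e : 𝓜(ℂ,E))) := by
      rw [star_mul, hfsa n]
      noncomm_ring
    have h5 : (0:𝓜(ℂ,E)) ≤ ((e : 𝓜(ℂ,E)) * (f n : 𝓜(ℂ,E))) *
        star ((e : 𝓜(ℂ,E)) * (f n : 𝓜(ℂ,E))) := mul_star_self_nonneg _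
    calc ((e : 𝓜(ℂ,E)) * ((f n : 𝓜(ℂ,E)) * a n)) *
        star ((e : 𝓜(ℂ,E)) * ((f n : 𝓜(ℂ,E)) * a n))
        = ((e : 𝓜(ℂ,E)) * (f n : 𝓜(ℂ,E))) * (a n * star (a n)) *
          star ((e : 𝓜(ℂ,E)) * (f n : 𝓜(ℂ,E))) := h1
      _ ≤ ‖a n * star (a n)‖ • (((e : 𝓜(ℂ,E)) * (f n : 𝓜(ℂ,E))) *
          star ((e : 𝓜(ℂ,E)) * (f n : 𝓜(ℂ,E)))) := h2
      _ ≤ C^2 • (((e : 𝓜(ℂ,E)) * (f n : 𝓜(ℂ,E))) *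
          star ((e : 𝓜(ℂ,E)) * (f n : 𝓜(ℂ,E)))) := smul_le_smul_right' h3 h5
      _ = C^2 • ((e : 𝓜(ℂ,E)) * ((f n : 𝓜(ℂ,E)) * (f n : 𝓜(ℂ,E))) * star ((e : 𝓜(ℂ,E)))) := by
          rw [h4]
  have hxsum : ∑ n ∈ s, ((e : 𝓜(ℂ,E)) * ((f n : 𝓜(ℂ,E)) * a n)) *
      star ((e : 𝓜(ℂ,E)) * ((f n : 𝓜(ℂ,E)) * a n)) ≤
      C^2 • ((e : 𝓜(ℂ,E)) * (∑ n ∈ s, (f n : 𝓜(ℂ,E)) * (f n : 𝓜(ℂ,E))) * star ((e : 𝓜(ℂ,E)))) := by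
    have : (e : 𝓜(ℂ,E)) * (∑ n ∈ s, (f n : 𝓜(ℂ,E)) * (f n : 𝓜(ℂ,E))) * star ((e : 𝓜(ℂ,E))) =
        ∑ n ∈ s, (e : 𝓜(ℂ,E)) * ((f n : 𝓜(ℂ,E)) * (f n : 𝓜(ℂ,E))) * star ((e : 𝓜(ℂ,E))) := by
      rw [Finset.mul_sum, Finset.sum_mul]
    rw [this, Finset.smul_sum]
    exact Finset.sum_le_sum hxterm
  have hxnn : (0:𝓜(ℂ,E)) ≤ ∑ n ∈ s, ((e : 𝓜(ℂ,E)) * ((f n : 𝓜(ℂ,E)) * a n)) *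
      star ((e : 𝓜(ℂ,E)) * ((f n : 𝓜(ℂ,E)) * a n)) :=
    Finset.sum_nonneg fun n _ => mul_star_self_nonneg _
  have hx : ‖∑ n ∈ s, ((e : 𝓜(ℂ,E)) * ((f n : 𝓜(ℂ,E)) * a n)) *
      star ((e : 𝓜(ℂ,E)) * ((f n : 𝓜(ℂ,E)) * a n))‖ ≤
      C^2 * (‖(e : 𝓜(ℂ,E)) * (∑ n ∈ s, (f n : 𝓜(ℂ,E)) * (f n : 𝓜(ℂ,E)))‖ * ‖e‖) := by
    calc ‖∑ n ∈ s, ((e : 𝓜(ℂ,E)) * ((f n : 𝓜(ℂ,E)) * a n)) *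
        star ((e : 𝓜(ℂ,E)) * ((f n : 𝓜(ℂ,E)) * a n))‖
        ≤ ‖C^2 • ((e : 𝓜(ℂ,E)) * (∑ n ∈ s, (f n : 𝓜(ℂ,E)) * (f n : 𝓜(ℂ,E))) *
            star ((e : 𝓜(ℂ,E))))‖ :=
          CStarAlgebra.norm_le_norm_of_nonneg_of_le hxnn hxsum
      _ = C^2 * ‖(e : 𝓜(ℂ,E)) * (∑ n ∈ s, (f n : 𝓜(ℂ,E)) * (f n : 𝓜(ℂ,E))) *
            star ((e : 𝓜(ℂ,E)))‖ := by
          rw [norm_smul, Real.norm_eq_abs, abs_of_nonneg (by positivity)]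
      _ ≤ C^2 * (‖(e : 𝓜(ℂ,E)) * (∑ n ∈ s, (f n : 𝓜(ℂ,E)) * (f n : 𝓜(ℂ,E)))‖ *
            ‖star ((e : 𝓜(ℂ,E)))‖) :=
          mul_le_mul_of_nonneg_left (norm_mul_le _ _) (by positivity)
      _ = C^2 * (‖(e : 𝓜(ℂ,E)) * (∑ n ∈ s, (f n : 𝓜(ℂ,E)) * (f n : 𝓜(ℂ,E)))‖ * ‖e‖) := by
          rw [norm_star, norm_coe]
  have hy : ‖∑ n ∈ s, star ((g n : E) : 𝓜(ℂ,E)) * (g n : 𝓜(ℂ,E))‖ ≤ 1 := by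
    have heq : ∀ n, star ((g n : E) : 𝓜(ℂ,E)) * (g n : 𝓜(ℂ,E)) =
        (g n : 𝓜(ℂ,E)) * (g n : 𝓜(ℂ,E)) := fun n => by rw [hgsa n]
    rw [Finset.sum_congr rfl fun n _ => heq n]
    exact hPg s
  calc ‖(e : 𝓜(ℂ,E)) * (∑ n ∈ s, (f n : 𝓜(ℂ,E)) * a n * (g n : 𝓜(ℂ,E)))‖^2
      ≤ ‖∑ n ∈ s, ((e : 𝓜(ℂ,E)) * ((f n : 𝓜(ℂ,E)) * a n)) *
          star ((e : 𝓜(ℂ,E)) * ((f n : 𝓜(ℂ,E)) * a n))‖ *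
        ‖∑ n ∈ s, star ((g n : E) : 𝓜(ℂ,E)) * (g n : 𝓜(ℂ,E))‖ := h
    _ ≤ (C^2 * (‖(e : 𝓜(ℂ,E)) * (∑ n ∈ s, (f n : 𝓜(ℂ,E)) * (f n : 𝓜(ℂ,E)))‖ * ‖e‖)) * 1 :=
        mul_le_mul hx hy (norm_nonneg _) (by positivity)
    _ = C^2 * (‖e‖ * ‖(e : 𝓜(ℂ,E)) * (∑ n ∈ s, (f n : 𝓜(ℂ,E)) * (f n : 𝓜(ℂ,E)))‖) := by ring

end bounds
end StrictAux
namespace StrictAux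

lemma gsum_eq {M : Type*} [AddCommMonoid M] (v : ℕ → M) (k : ℤ) (s : Finset ℕ) :
    ∑ n ∈ s, (if 0 ≤ (n:ℤ)+k then v ((n:ℤ)+k).toNat else 0) =
    ∑ m ∈ (s.filter (fun n : ℕ => 0 ≤ (n:ℤ)+k)).image (fun n : ℕ => ((n:ℤ)+k).toNat), v m := by
  rw [Finset.sum_image (by intro p hp q hq h; simp only [Finset.mem_coe, Finset.mem_filter] at hp hq h; omega)]
  rw [Finset.sum_filter]

lemma gimage_eq (k : ℤ) (N : ℕ) :
    ((Finset.range N).filter (fun n : ℕ => 0 ≤ (n:ℤ)+k)).image (fun n : ℕ => ((n:ℤ)+k).toNat) =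
    Finset.Ico k.toNat ((N:ℤ)+k).toNat := by
  ext m
  simp only [Finset.mem_image, Finset.mem_filter, Finset.mem_range, Finset.mem_Ico]
  constructor
  · rintro ⟨n, ⟨hn, hc⟩, rfl⟩; omega
  · intro hm
    refine ⟨((m:ℤ) - k).toNat, ⟨by omega, by omega⟩, by omega⟩

end StrictAux

/-- If `E` is σ-unital, `(fₙ)` are positive contractions in `E` with `Σ fₙ²` strictly
convergent to `1` and `fₘfₙ = 0` for `|m - n| ≥ 2`, then for every `k ∈ ℤ` and bounded
`(aₙ)` in `𝓜(ℂ, E)` the sum `Σ fₙ aₙ f_{n+k}` converges strictly to an element of norm at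
most `supₙ ‖aₙ‖`, whose image in the corona `𝓜(ℂ, E)/E` has norm at most `limsupₙ ‖aₙ‖`
(the corona norm being the distance to `E`). -/
theorem strict_sum_shift_estimate
    {E : Type*} [NonUnitalCStarAlgebra E] (u : ℕ → E) (hu : IsApproxUnit u)
    (f : ℕ → E) (hf : ∀ n, (∃ b, f n = star b * b) ∧ ‖f n‖ ≤ 1)
    (hsum : StrictTendsto (fun N => ((∑ n ∈ Finset.range N, f n * f n : E) : 𝓜(ℂ, E))) 1)
    (horth : ∀ m n, m + 2 ≤ n ∨ n + 2 ≤ m → f m * f n = 0)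
    (k : ℤ) (a : ℕ → 𝓜(ℂ, E)) (M : ℝ) (hM : ∀ n, ‖a n‖ ≤ M) :
    ∃ T : 𝓜(ℂ, E),
      StrictTendsto (fun N => ∑ n ∈ Finset.range N,
        (f n : 𝓜(ℂ, E)) * a n *
          ((if 0 ≤ (n : ℤ) + k then f ((n : ℤ) + k).toNat else 0 : E) : 𝓜(ℂ, E))) T ∧
      ‖T‖ ≤ ⨆ n, ‖a n‖ ∧
      ∀ η > (0 : ℝ), ∃ x : E,
        ‖T - (x : 𝓜(ℂ, E))‖ ≤ Filter.limsup (fun n => ‖a n‖) atTop + η := by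
  classical
  letI : PartialOrder 𝓜(ℂ, E) := CStarAlgebra.spectralOrder _
  haveI : StarOrderedRing 𝓜(ℂ, E) := CStarAlgebra.spectralOrderedRing _
  obtain ⟨hu1, hu2⟩ := hu
  have huL : ∀ x : E, Tendsto (fun n => ‖u n * x - x‖) atTop (nhds 0) := fun x => (hu2 x).1
  have huR : ∀ x : E, Tendsto (fun n => ‖x * u n - x‖) atTop (nhds 0) := fun x => (hu2 x).2
  have hfsa : ∀ n, star (f n) = f n := fun n => by
    obtain ⟨b, hb⟩ := (hf n).1; rw [hb, star_mul, star_star]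
  set g : ℕ → E := fun n => if 0 ≤ (n : ℤ) + k then f ((n : ℤ) + k).toNat else 0 with hgdef
  have hgsa : ∀ n, star (g n) = g n := fun n => by
    by_cases h : 0 ≤ (n : ℤ) + k
    · simp only [hgdef, if_pos h]; exact hfsa _
    · simp only [hgdef, if_neg h, star_zero]
  have hfsaM : ∀ n, star ((f n : E) : 𝓜(ℂ,E)) = ((f n : E) : 𝓜(ℂ,E)) := fun n => by
    rw [← StrictAux.coe_star, hfsa n]
  have hgsaM : ∀ n, star ((g n : E) : 𝓜(ℂ,E)) = ((g n : E) : 𝓜(ℂ,E)) := fun n => by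
    rw [← StrictAux.coe_star, hgsa n]
  have hfsqM : ∀ n, (0:𝓜(ℂ,E)) ≤ (f n : 𝓜(ℂ,E)) * (f n : 𝓜(ℂ,E)) := fun n =>
    StrictAux.sq_coe_nonneg (hfsa n)
  have hsumL : ∀ e : E, Tendsto
      (fun N => ((∑ n ∈ Finset.range N, f n * f n : E) : 𝓜(ℂ,E)) * (e : 𝓜(ℂ,E)))
      atTop (nhds (e : 𝓜(ℂ,E))) := by
    intro e
    rw [tendsto_iff_norm_sub_tendsto_zero]
    refine ((hsum e).1).congr fun N => ?_
    rw [sub_mul, one_mul]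
  have hsumR : ∀ e : E, Tendsto
      (fun N => (e : 𝓜(ℂ,E)) * ((∑ n ∈ Finset.range N, f n * f n : E) : 𝓜(ℂ,E)))
      atTop (nhds (e : 𝓜(ℂ,E))) := by
    intro e
    rw [tendsto_iff_norm_sub_tendsto_zero]
    refine ((hsum e).2).congr fun N => ?_
    rw [mul_sub, mul_one]
  have hPf : ∀ s : Finset ℕ, ‖∑ n ∈ s, (f n : 𝓜(ℂ,E)) * (f n : 𝓜(ℂ,E))‖ ≤ 1 :=
    StrictAux.normP u f huL hfsa hsumL
  have hgsq : ∀ n, (g n : 𝓜(ℂ,E)) * (g n : 𝓜(ℂ,E)) =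
      (if 0 ≤ (n : ℤ) + k then
        ((f ((n : ℤ) + k).toNat : E) : 𝓜(ℂ,E)) * ((f ((n : ℤ) + k).toNat : E) : 𝓜(ℂ,E))
      else 0) := by
    intro n
    by_cases h : 0 ≤ (n : ℤ) + k
    · simp only [hgdef, if_pos h]
    · simp only [hgdef, if_neg h]
      rw [show ((0:E) : 𝓜(ℂ,E)) = 0 from
        map_zero (DoubleCentralizer.coeHom : E →⋆ₙₐ[ℂ] 𝓜(ℂ, E)), mul_zero]
  have hPg : ∀ s : Finset ℕ, ‖∑ n ∈ s, (g n : 𝓜(ℂ,E)) * (g n : 𝓜(ℂ,E))‖ ≤ 1 := by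
    intro s
    rw [Finset.sum_congr rfl fun n _ => hgsq n,
      StrictAux.gsum_eq (fun m => (f m : 𝓜(ℂ,E)) * (f m : 𝓜(ℂ,E))) k s]
    exact hPf _
  -- partial sums of squares in 𝓜
  set Fc : ℕ → 𝓜(ℂ,E) := fun N => ∑ n ∈ Finset.range N, (f n : 𝓜(ℂ,E)) * (f n : 𝓜(ℂ,E))
    with hFc
  set Gc : ℕ → 𝓜(ℂ,E) := fun N => ∑ n ∈ Finset.range N, (g n : 𝓜(ℂ,E)) * (g n : 𝓜(ℂ,E))
    with hGc
  have hcoeF : ∀ N, ((∑ n ∈ Finset.range N, f n * f n : E) : 𝓜(ℂ,E)) = Fc N := fun N => by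
    rw [StrictAux.coe_sum]
    exact Finset.sum_congr rfl fun n _ => StrictAux.coe_mul _ _
  have hFcL : ∀ e : E, Tendsto (fun N => Fc N * (e : 𝓜(ℂ,E))) atTop (nhds (e : 𝓜(ℂ,E))) :=
    fun e => (hsumL e).congr fun N => by rw [hcoeF N]
  have hFcR : ∀ e : E, Tendsto (fun N => (e : 𝓜(ℂ,E)) * Fc N) atTop (nhds (e : 𝓜(ℂ,E))) :=
    fun e => (hsumR e).congr fun N => by rw [hcoeF N]
  have hshift : ∀ N, Gc N = Fc (((N:ℤ)+k).toNat) - Fc k.toNat := by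
    intro N
    have h1 : Gc N = ∑ m ∈ Finset.Ico k.toNat (((N:ℤ)+k).toNat),
        (f m : 𝓜(ℂ,E)) * (f m : 𝓜(ℂ,E)) := by
      rw [hGc]
      calc (∑ n ∈ Finset.range N, (g n : 𝓜(ℂ,E)) * (g n : 𝓜(ℂ,E)))
          = ∑ n ∈ Finset.range N, (if 0 ≤ (n:ℤ)+k then
              ((f ((n:ℤ)+k).toNat : E) : 𝓜(ℂ,E)) * ((f ((n:ℤ)+k).toNat : E) : 𝓜(ℂ,E)) else 0) :=
            Finset.sum_congr rfl fun n _ => hgsq n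
        _ = _ := by
            rw [StrictAux.gsum_eq (fun m => (f m : 𝓜(ℂ,E)) * (f m : 𝓜(ℂ,E))) k,
              StrictAux.gimage_eq]
    rw [h1, Finset.sum_Ico_eq_sub _ (by omega)]
  have htop : Tendsto (fun N : ℕ => ((N:ℤ)+k).toNat) atTop atTop := by
    apply tendsto_atTop_atTop.mpr
    intro b
    exact ⟨b + (-k).toNat, fun n hn => by omega⟩
  have hGcL : ∀ e : E, CauchySeq (fun N => Gc N * (e : 𝓜(ℂ,E))) := by
    intro e
    have ht : Tendsto (fun N => Gc N * (e : 𝓜(ℂ,E))) atTop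
        (nhds ((e : 𝓜(ℂ,E)) - Fc k.toNat * (e : 𝓜(ℂ,E)))) := by
      refine ((((hFcL e).comp htop)).sub tendsto_const_nhds).congr fun N => ?_
      rw [hshift N, sub_mul]
      rfl
    exact ht.cauchySeq
  have hFcCR : ∀ e : E, CauchySeq (fun N => (e : 𝓜(ℂ,E)) * Fc N) :=
    fun e => (hFcR e).cauchySeq
  -- supremum constant
  set M' : ℝ := ⨆ n, ‖a n‖ with hM'def
  have hbdd : BddAbove (Set.range fun n => ‖a n‖) := ⟨M, by rintro _ ⟨n, rfl⟩; exact hM n⟩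
  have hM' : ∀ n, ‖a n‖ ≤ M' := fun n => le_ciSup hbdd n
  have hM'0 : 0 ≤ M' := (norm_nonneg (a 0)).trans (hM' 0)
  -- the partial sums
  set Sm : ℕ → 𝓜(ℂ,E) := fun N => ∑ n ∈ Finset.range N,
    (f n : 𝓜(ℂ,E)) * a n * (g n : 𝓜(ℂ,E)) with hSm
  have hSmIco : ∀ {Q P : ℕ}, Q ≤ P → Sm P - Sm Q =
      ∑ n ∈ Finset.Ico Q P, (f n : 𝓜(ℂ,E)) * a n * (g n : 𝓜(ℂ,E)) :=
    fun {Q P} h => (Finset.sum_Ico_eq_sub _ h).symm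
  have hGcIco : ∀ {Q P : ℕ}, Q ≤ P → Gc P - Gc Q =
      ∑ n ∈ Finset.Ico Q P, (g n : 𝓜(ℂ,E)) * (g n : 𝓜(ℂ,E)) :=
    fun {Q P} h => (Finset.sum_Ico_eq_sub _ h).symm
  have hFcIco : ∀ {Q P : ℕ}, Q ≤ P → Fc P - Fc Q =
      ∑ n ∈ Finset.Ico Q P, (f n : 𝓜(ℂ,E)) * (f n : 𝓜(ℂ,E)) :=
    fun {Q P} h => (Finset.sum_Ico_eq_sub _ h).symm
  have hSmBound : ∀ (C : ℝ), 0 ≤ C → ∀ (s : Finset ℕ), (∀ n ∈ s, ‖a n‖ ≤ C) →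
      ‖∑ n ∈ s, (f n : 𝓜(ℂ,E)) * a n * (g n : 𝓜(ℂ,E))‖ ≤ C :=
    fun C hC s hCa => StrictAux.bound_i f g a hfsaM hgsaM hfsqM hPf hPg C hC s hCa
  have hSmNorm : ∀ N, ‖Sm N‖ ≤ M' := fun N => hSmBound M' hM'0 _ (fun n _ => hM' n)
  -- norm transfer helpers
  have hcoeL : ∀ (W : 𝓜(ℂ,E)) (e : E), ‖W.fst e‖ = ‖W * (e : 𝓜(ℂ,E))‖ := fun W e => by
    rw [StrictAux.mul_coe u huL W e, StrictAux.norm_coe]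
  have hcoeR : ∀ (W : 𝓜(ℂ,E)) (e : E), ‖W.snd e‖ = ‖(e : 𝓜(ℂ,E)) * W‖ := fun W e => by
    rw [StrictAux.coe_mul' u huR W e, StrictAux.norm_coe]
  have hsubfst : ∀ (W V : 𝓜(ℂ,E)) (e : E), (W - V).fst e = W.fst e - V.fst e :=
    fun W V e => by rw [DoubleCentralizer.sub_fst]; rfl
  have hsubsnd : ∀ (W V : 𝓜(ℂ,E)) (e : E), (W - V).snd e = W.snd e - V.snd e :=
    fun W V e => by rw [DoubleCentralizer.sub_snd]; rfl
  set M₀ : ℝ := M' + 1 with hM₀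
  have hM₀pos : 0 < M₀ := by positivity
  have hMM₀ : ∀ n, ‖a n‖ ≤ M₀ := fun n => (hM' n).trans (by linarith)
  -- Cauchy sequences of actions
  have cL : ∀ e : E, CauchySeq fun N => (Sm N).fst e := by
    intro e
    rw [Metric.cauchySeq_iff]
    intro ε hε
    set δ : ℝ := ε^2 / (2 * (M₀^2 * (‖e‖+1))) with hδ
    have hδpos : 0 < δ := by positivity
    obtain ⟨N₀, hN₀⟩ := Metric.cauchySeq_iff.mp (hGcL e) δ hδpos
    have main : ∀ P Q : ℕ, N₀ ≤ Q → Q ≤ P → dist ((Sm P).fst e) ((Sm Q).fst e) < ε := by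
      intro P Q hQ hQP
      rw [dist_eq_norm, ← hsubfst, hcoeL]
      have h2 := StrictAux.bound_iiL f g a hfsaM hgsaM hfsqM hPf M₀ hM₀pos.le
        (Finset.Ico Q P) (fun n _ => hMM₀ n) e
      rw [← hSmIco hQP] at h2
      have h3 : (∑ n ∈ Finset.Ico Q P, (g n : 𝓜(ℂ,E)) * (g n : 𝓜(ℂ,E))) * (e : 𝓜(ℂ,E)) =
          Gc P * (e : 𝓜(ℂ,E)) - Gc Q * (e : 𝓜(ℂ,E)) := by
        rw [← hGcIco hQP, sub_mul]
      have h4 : ‖(∑ n ∈ Finset.Ico Q P, (g n : 𝓜(ℂ,E)) * (g n : 𝓜(ℂ,E))) * (e : 𝓜(ℂ,E))‖ < δ := by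
        rw [h3, ← dist_eq_norm]
        exact hN₀ P (hQ.trans hQP) Q hQ
      have h5 : ‖e‖ * ‖(∑ n ∈ Finset.Ico Q P, (g n : 𝓜(ℂ,E)) * (g n : 𝓜(ℂ,E))) *
          (e : 𝓜(ℂ,E))‖ ≤ (‖e‖+1) * δ :=
        mul_le_mul (by linarith [norm_nonneg e]) h4.le (norm_nonneg _) (by positivity)
      have h6 : M₀^2 * ((‖e‖+1) * δ) = ε^2/2 := by
        rw [hδ]; field_simp
      have h7 : ‖(Sm P - Sm Q) * (e : 𝓜(ℂ,E))‖^2 ≤ ε^2/2 := by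
        calc ‖(Sm P - Sm Q) * (e : 𝓜(ℂ,E))‖^2
            ≤ M₀^2 * (‖e‖ * ‖(∑ n ∈ Finset.Ico Q P, (g n : 𝓜(ℂ,E)) * (g n : 𝓜(ℂ,E))) *
              (e : 𝓜(ℂ,E))‖) := h2
          _ ≤ M₀^2 * ((‖e‖+1) * δ) := mul_le_mul_of_nonneg_left h5 (by positivity)
          _ = ε^2/2 := h6
      nlinarith [norm_nonneg ((Sm P - Sm Q) * ((e : E) : 𝓜(ℂ,E)))]
    refine ⟨N₀, fun P hP Q hQ => ?_⟩
    rcases le_total Q P with h | h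
    · exact main P Q hQ h
    · rw [dist_comm]; exact main Q P hP h
  have cR : ∀ e : E, CauchySeq fun N => (Sm N).snd e := by
    intro e
    rw [Metric.cauchySeq_iff]
    intro ε hε
    set δ : ℝ := ε^2 / (2 * (M₀^2 * (‖e‖+1))) with hδ
    have hδpos : 0 < δ := by positivity
    obtain ⟨N₀, hN₀⟩ := Metric.cauchySeq_iff.mp (hFcCR e) δ hδpos
    have main : ∀ P Q : ℕ, N₀ ≤ Q → Q ≤ P → dist ((Sm P).snd e) ((Sm Q).snd e) < ε := by
      intro P Q hQ hQP
      rw [dist_eq_norm, ← hsubsnd, hcoeR]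
      have h2 := StrictAux.bound_iiR f g a hfsaM hgsaM hfsqM hPg M₀ hM₀pos.le
        (Finset.Ico Q P) (fun n _ => hMM₀ n) e
      rw [← hSmIco hQP] at h2
      have h3 : (e : 𝓜(ℂ,E)) * (∑ n ∈ Finset.Ico Q P, (f n : 𝓜(ℂ,E)) * (f n : 𝓜(ℂ,E))) =
          (e : 𝓜(ℂ,E)) * Fc P - (e : 𝓜(ℂ,E)) * Fc Q := by
        rw [← hFcIco hQP, mul_sub]
      have h4 : ‖(e : 𝓜(ℂ,E)) * (∑ n ∈ Finset.Ico Q P, (f n : 𝓜(ℂ,E)) * (f n : 𝓜(ℂ,E)))‖ < δ := by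
        rw [h3, ← dist_eq_norm]
        exact hN₀ P (hQ.trans hQP) Q hQ
      have h5 : ‖e‖ * ‖(e : 𝓜(ℂ,E)) * (∑ n ∈ Finset.Ico Q P,
          (f n : 𝓜(ℂ,E)) * (f n : 𝓜(ℂ,E)))‖ ≤ (‖e‖+1) * δ :=
        mul_le_mul (by linarith [norm_nonneg e]) h4.le (norm_nonneg _) (by positivity)
      have h6 : M₀^2 * ((‖e‖+1) * δ) = ε^2/2 := by
        rw [hδ]; field_simp
      have h7 : ‖(e : 𝓜(ℂ,E)) * (Sm P - Sm Q)‖^2 ≤ ε^2/2 := by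
        calc ‖(e : 𝓜(ℂ,E)) * (Sm P - Sm Q)‖^2
            ≤ M₀^2 * (‖e‖ * ‖(e : 𝓜(ℂ,E)) * (∑ n ∈ Finset.Ico Q P,
              (f n : 𝓜(ℂ,E)) * (f n : 𝓜(ℂ,E)))‖) := h2
          _ ≤ M₀^2 * ((‖e‖+1) * δ) := mul_le_mul_of_nonneg_left h5 (by positivity)
          _ = ε^2/2 := h6
      nlinarith [norm_nonneg (((e : E) : 𝓜(ℂ,E)) * (Sm P - Sm Q))]
    refine ⟨N₀, fun P hP Q hQ => ?_⟩
    rcases le_total Q P with h | h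
    · exact main P Q hQ h
    · rw [dist_comm]; exact main Q P hP h
  -- limits
  have keyL : ∀ e : E, ∃ x : E, Tendsto (fun N => (Sm N).fst e) atTop (nhds x) :=
    fun e => cauchySeq_tendsto_of_complete (cL e)
  have keyR : ∀ e : E, ∃ x : E, Tendsto (fun N => (Sm N).snd e) atTop (nhds x) :=
    fun e => cauchySeq_tendsto_of_complete (cR e)
  choose Lf hLf using keyL
  choose Rf hRf using keyR
  have hLfBound : ∀ e, ‖Lf e‖ ≤ M' * ‖e‖ := by
    intro e
    refine le_of_tendsto (hLf e).norm (Eventually.of_forall fun N => ?_)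
    rw [hcoeL (Sm N) e]
    calc ‖Sm N * ((e : E) : 𝓜(ℂ,E))‖ ≤ ‖Sm N‖ * ‖((e : E) : 𝓜(ℂ,E))‖ := norm_mul_le _ _
      _ ≤ M' * ‖e‖ := by
          rw [StrictAux.norm_coe]
          exact mul_le_mul_of_nonneg_right (hSmNorm N) (norm_nonneg e)
  have hRfBound : ∀ e, ‖Rf e‖ ≤ M' * ‖e‖ := by
    intro e
    refine le_of_tendsto (hRf e).norm (Eventually.of_forall fun N => ?_)
    rw [hcoeR (Sm N) e]
    calc ‖((e : E) : 𝓜(ℂ,E)) * Sm N‖ ≤ ‖((e : E) : 𝓜(ℂ,E))‖ * ‖Sm N‖ := norm_mul_le _ _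
      _ ≤ ‖e‖ * M' := by
          rw [StrictAux.norm_coe]
          exact mul_le_mul_of_nonneg_left (hSmNorm N) (norm_nonneg e)
      _ = M' * ‖e‖ := mul_comm _ _
  have hLadd : ∀ x y, Lf (x + y) = Lf x + Lf y := fun x y =>
    tendsto_nhds_unique (hLf (x+y)) (((hLf x).add (hLf y)).congr fun N => (map_add _ _ _).symm)
  have hLsmul : ∀ (c : ℂ) (x : E), Lf (c • x) = c • Lf x := fun c x =>
    tendsto_nhds_unique (hLf (c • x)) (((hLf x).const_smul c).congr fun N =>
      (map_smul _ _ _).symm)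
  have hRadd : ∀ x y, Rf (x + y) = Rf x + Rf y := fun x y =>
    tendsto_nhds_unique (hRf (x+y)) (((hRf x).add (hRf y)).congr fun N => (map_add _ _ _).symm)
  have hRsmul : ∀ (c : ℂ) (x : E), Rf (c • x) = c • Rf x := fun c x =>
    tendsto_nhds_unique (hRf (c • x)) (((hRf x).const_smul c).congr fun N =>
      (map_smul _ _ _).symm)
  set Lclm : E →L[ℂ] E := LinearMap.mkContinuous
    { toFun := Lf, map_add' := hLadd, map_smul' := hLsmul } M' hLfBound with hLclm
  set Rclm : E →L[ℂ] E := LinearMap.mkContinuous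
    { toFun := Rf, map_add' := hRadd, map_smul' := hRsmul } M' hRfBound with hRclm
  have hcent : ∀ x y : E, Rclm x * y = x * Lclm y := by
    intro x y
    have t1 : Tendsto (fun N => (Sm N).snd x * y) atTop (nhds (Rf x * y)) :=
      (hRf x).mul tendsto_const_nhds
    have t2 : Tendsto (fun N => (Sm N).snd x * y) atTop (nhds (x * Lf y)) :=
      (tendsto_const_nhds.mul (hLf y)).congr fun N => ((Sm N).central x y).symm
    exact tendsto_nhds_unique t1 t2
  set T : 𝓜(ℂ,E) := ⟨(Lclm, Rclm), hcent⟩ with hT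
  have hTfst : ∀ e, T.fst e = Lf e := fun e => rfl
  have hTsnd : ∀ e, T.snd e = Rf e := fun e => rfl
  refine ⟨T, ?_, ?_, ?_⟩
  · show StrictTendsto Sm T
    intro e
    constructor
    · have he : ∀ N, ‖(Sm N - T) * ((e : E) : 𝓜(ℂ,E))‖ = ‖(Sm N).fst e - Lf e‖ := fun N => by
        rw [← hcoeL (Sm N - T) e, hsubfst, hTfst]
      simp only [he]
      exact tendsto_iff_norm_sub_tendsto_zero.mp (hLf e)
    · have he : ∀ N, ‖((e : E) : 𝓜(ℂ,E)) * (Sm N - T)‖ = ‖(Sm N).snd e - Rf e‖ := fun N => by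
        rw [← hcoeR (Sm N - T) e, hsubsnd, hTsnd]
      simp only [he]
      exact tendsto_iff_norm_sub_tendsto_zero.mp (hRf e)
  · rw [← DoubleCentralizer.norm_fst]
    refine ContinuousLinearMap.opNorm_le_bound _ hM'0 fun e => ?_
    exact hLfBound e
  · intro η hη
    have hbddU : IsBoundedUnder (· ≤ ·) atTop (fun n => ‖a n‖) :=
      ⟨M, eventually_map.mpr (Eventually.of_forall hM)⟩
    have hev : ∀ᶠ n in atTop, ‖a n‖ < Filter.limsup (fun n => ‖a n‖) atTop + η :=
      eventually_lt_of_limsup_lt (by linarith) hbddU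
    obtain ⟨N₀, hN₀⟩ := eventually_atTop.mp hev
    set l : ℝ := Filter.limsup (fun n => ‖a n‖) atTop with hl
    have hl0 : 0 ≤ l + η := (norm_nonneg (a N₀)).trans (hN₀ N₀ le_rfl).le
    refine ⟨∑ n ∈ Finset.range N₀, ((f n : 𝓜(ℂ,E)) * a n).fst (g n), ?_⟩
    have hx : ((∑ n ∈ Finset.range N₀, ((f n : 𝓜(ℂ,E)) * a n).fst (g n) : E) : 𝓜(ℂ,E)) =
        Sm N₀ := by
      rw [StrictAux.coe_sum]
      exact Finset.sum_congr rfl fun n _ => (StrictAux.mul_coe u huL _ _).symm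
    rw [hx, ← DoubleCentralizer.norm_fst]
    refine ContinuousLinearMap.opNorm_le_bound _ hl0 fun e => ?_
    have h1 : (T - Sm N₀).fst e = Lf e - (Sm N₀).fst e := by rw [hsubfst, hTfst]
    rw [show (T - Sm N₀).fst e = Lf e - (Sm N₀).fst e from h1]
    refine le_of_tendsto ((hLf e).sub tendsto_const_nhds).norm ?_
    refine eventually_atTop.mpr ⟨N₀, fun P hP => ?_⟩
    have h2 : ‖(Sm P).fst e - (Sm N₀).fst e‖ = ‖(Sm P - Sm N₀) * ((e : E) : 𝓜(ℂ,E))‖ := by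
      rw [← hsubfst, hcoeL]
    rw [h2]
    calc ‖(Sm P - Sm N₀) * ((e : E) : 𝓜(ℂ,E))‖
        ≤ ‖Sm P - Sm N₀‖ * ‖((e : E) : 𝓜(ℂ,E))‖ := norm_mul_le _ _
      _ ≤ (l + η) * ‖e‖ := by
          rw [StrictAux.norm_coe]
          refine mul_le_mul ?_ le_rfl (norm_nonneg _) hl0
          rw [hSmIco hP]
          exact hSmBound (l+η) hl0 _ (fun n hn => (hN₀ n (Finset.mem_Ico.mp hn).1).le)
end

section
/- Let A be a non-unital σ-unital C*-algebra with a strictly positive contraction e ∈ A. Then T = (1 − e)^{1/2} ∈ M(A) has norm one, but φ̃(T²) < 1 for every state φ on A (where φ̃ is the unique state extension to M(A)). In particular, the supremum ‖T‖ = sup_φ φ̃(T*T)^{1/2} is not attained. -/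
open scoped ComplexOrder MultiplierAlgebra

/-- A state on a (possibly non-unital) C*-algebra: a positive linear functional of norm one. -/
def IsState {A : Type*} [NonUnitalCStarAlgebra A] (φ : A →L[ℂ] ℂ) : Prop :=
  ‖φ‖ = 1 ∧ ∀ a : A, 0 ≤ φ (star a * a)

section Aux

variable {A : Type*} [NonUnitalCStarAlgebra A]

lemma myCoe_injective : Function.Injective ((↑) : A → 𝓜(ℂ, A)) := by
  intro a b h
  have h' : ∀ x : A, a * x = b * x := fun x => by
    have := congrArg (fun m : 𝓜(ℂ, A) => m.fst x) h
    simpa using this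
  have hd : (a - b) * star (a - b) = 0 := by
    rw [sub_mul, h' (star (a - b)), sub_self]
  have : ‖a - b‖ * ‖a - b‖ = 0 := by
    rw [← CStarRing.norm_self_mul_star, hd, norm_zero]
  have : ‖a - b‖ = 0 := by nlinarith [norm_nonneg (a - b)]
  rw [← sub_eq_zero]
  exact norm_eq_zero.mp this

lemma myFst_mul_right (m : 𝓜(ℂ, A)) (a x : A) : m.fst (a * x) = m.fst a * x := by
  set d := m.fst (a * x) - m.fst a * x with hd
  have key : ∀ z : A, z * d = 0 := by
    intro z
    have h1 : z * m.fst (a * x) = m.snd z * (a * x) := (m.central z (a * x)).symm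
    have h2 : z * m.fst a = m.snd z * a := (m.central z a).symm
    have : z * m.fst (a * x) = z * (m.fst a * x) := by
      rw [h1, ← mul_assoc, ← h2, mul_assoc]
    simp [hd, mul_sub, this]
  have hdd : star d * d = 0 := key (star d)
  have : ‖d‖ * ‖d‖ = 0 := by
    rw [← CStarRing.norm_star_mul_self, hdd, norm_zero]
  have : d = 0 := norm_eq_zero.mp (by nlinarith [norm_nonneg d])
  rw [← sub_eq_zero]
  exact this

lemma myMul_coe (m : 𝓜(ℂ, A)) (a : A) :
    m * (a : 𝓜(ℂ, A)) = ((m.fst a : A) : 𝓜(ℂ, A)) := by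
  refine DoubleCentralizer.ext _ _ _ _ (Prod.ext ?_ ?_)
  · refine ContinuousLinearMap.ext fun x => ?_
    show (m * (a : 𝓜(ℂ, A))).fst x = _
    rw [DoubleCentralizer.mul_fst]
    simpa using myFst_mul_right m a x
  · refine ContinuousLinearMap.ext fun x => ?_
    show (m * (a : 𝓜(ℂ, A))).snd x = _
    rw [DoubleCentralizer.mul_snd]
    simpa using m.central x a

lemma myCoe_mul (a b : A) :
    ((a * b : A) : 𝓜(ℂ, A)) = (a : 𝓜(ℂ, A)) * (b : 𝓜(ℂ, A)) :=
  map_mul (DoubleCentralizer.coeHom (𝕜 := ℂ) (A := A)) a b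

lemma myCoe_star (a : A) :
    ((star a : A) : 𝓜(ℂ, A)) = star (a : 𝓜(ℂ, A)) :=
  map_star (DoubleCentralizer.coeHom (𝕜 := ℂ) (A := A)) a

end Aux

/-- If `A` is a non-unital σ-unital C*-algebra with a strictly positive contraction `e`,
then `T = (1 - e)^{1/2} ∈ 𝓜(ℂ, A)` has norm one, but `φ̃(T²) < 1` for every state `φ` of
`A` (with unique state extension `φ̃` to `𝓜(ℂ, A)`); so the supremum
`‖T‖ = sup_φ φ̃(T*T)^{1/2}` is not attained. -/
theorem norm_sup_not_attained {A : Type*} [NonUnitalCStarAlgebra A]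
    (hnu : ¬ ∃ u : A, ∀ a : A, u * a = a ∧ a * u = a)
    (e : A) (hpos : ∃ b : A, e = star b * b) (hcontr : ‖e‖ ≤ 1)
    (hstrict : ∀ φ : A →L[ℂ] ℂ, IsState φ → 0 < (φ e).re)
    (T : 𝓜(ℂ, A)) (hTsa : star T = T) (hTsq : T * T = 1 - (e : 𝓜(ℂ, A))) :
    ‖T‖ = 1 ∧
    ∀ (φ : A →L[ℂ] ℂ) (ψ : 𝓜(ℂ, A) →L[ℂ] ℂ), IsState φ → IsState ψ →
      (∀ a : A, ψ (a : 𝓜(ℂ, A)) = φ a) → (ψ (T * T)).re < 1 := by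
  letI : PartialOrder 𝓜(ℂ, A) := CStarAlgebra.spectralOrder _
  letI : StarOrderedRing 𝓜(ℂ, A) := CStarAlgebra.spectralOrderedRing _
  -- A is nontrivial
  have hA : Nontrivial A := by
    by_contra h
    rw [not_nontrivial_iff_subsingleton] at h
    exact hnu ⟨0, fun a => ⟨Subsingleton.elim _ _, Subsingleton.elim _ _⟩⟩
  have hM : Nontrivial 𝓜(ℂ, A) := by
    obtain ⟨a, b, hab⟩ := hA
    exact ⟨(a : 𝓜(ℂ, A)), (b : 𝓜(ℂ, A)), fun h => hab (myCoe_injective h)⟩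
  -- coe e is a positive contraction
  have hepos : (0 : 𝓜(ℂ, A)) ≤ (e : 𝓜(ℂ, A)) := by
    obtain ⟨b, rfl⟩ := hpos
    rw [myCoe_mul, myCoe_star]
    exact star_mul_self_nonneg _
  have henorm : ‖(e : 𝓜(ℂ, A))‖ ≤ 1 := by
    rw [← DoubleCentralizer.norm_fst]
    exact (ContinuousLinearMap.opNorm_mul_apply_le ℂ A e).trans hcontr
  have hele : (e : 𝓜(ℂ, A)) ≤ 1 := (CStarAlgebra.norm_le_one_iff_of_nonneg _ hepos).mp henorm
  -- upper bound for ‖1 - e‖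
  have h1e_nonneg : (0 : 𝓜(ℂ, A)) ≤ 1 - (e : 𝓜(ℂ, A)) := by
    rwa [sub_nonneg]
  have h1e_le : (1 : 𝓜(ℂ, A)) - (e : 𝓜(ℂ, A)) ≤ 1 := by
    have := sub_le_self (1 : 𝓜(ℂ, A)) hepos
    exact this
  have hnorm_le : ‖(1 : 𝓜(ℂ, A)) - (e : 𝓜(ℂ, A))‖ ≤ 1 :=
    (CStarAlgebra.norm_le_one_iff_of_nonneg _ h1e_nonneg).mpr h1e_le
  -- lower bound for ‖1 - e‖
  have hnorm_ge : 1 ≤ ‖(1 : 𝓜(ℂ, A)) - (e : 𝓜(ℂ, A))‖ := by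
    by_contra h
    push_neg at h
    -- then e is invertible in the multiplier algebra
    have hu : IsUnit ((e : 𝓜(ℂ, A))) := by
      have := (Units.oneSub ((1 : 𝓜(ℂ, A)) - (e : 𝓜(ℂ, A))) h).isUnit
      simpa using this
    obtain ⟨m, hm⟩ := hu
    set u : A := (↑m⁻¹ : 𝓜(ℂ, A)).fst e with hu_def
    have hcoe_u : ((u : A) : 𝓜(ℂ, A)) = 1 := by
      have h2 := myMul_coe (↑m⁻¹ : 𝓜(ℂ, A)) e
      rw [← h2, ← hm, Units.inv_mul]
    refine hnu ⟨u, fun a => ⟨?_, ?_⟩⟩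
    · apply myCoe_injective
      rw [myCoe_mul, hcoe_u, one_mul]
    · apply myCoe_injective
      rw [myCoe_mul, hcoe_u, mul_one]
  have hnorm_eq : ‖(1 : 𝓜(ℂ, A)) - (e : 𝓜(ℂ, A))‖ = 1 := le_antisymm hnorm_le hnorm_ge
  have hT1 : ‖T‖ = 1 := by
    have h2 : ‖star T * T‖ = 1 := by rw [hTsa, hTsq, hnorm_eq]
    rw [CStarRing.norm_star_mul_self] at h2
    nlinarith [norm_nonneg T]
  refine ⟨hT1, fun φ ψ hφ hψ hext => ?_⟩
  have hψe : ψ ((e : 𝓜(ℂ, A))) = φ e := hext e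
  have h1 : (ψ 1).re ≤ 1 := by
    calc (ψ 1).re ≤ ‖ψ 1‖ := Complex.re_le_norm _
      _ = ‖ψ 1‖ := rfl
      _ ≤ ‖ψ‖ * ‖(1 : 𝓜(ℂ, A))‖ := ψ.le_opNorm 1
      _ = 1 := by rw [hψ.1, norm_one, one_mul]
  have : ψ (T * T) = ψ 1 - φ e := by rw [hTsq, map_sub, hψe]
  rw [this]
  have := hstrict φ hφ
  simp only [Complex.sub_re]
  linarith
end

section
/- Let Γ be a finitely generated group with property (T). Then for each finite-dimensional Hilbert space H, there are only finitely many pairwise inequivalent irreducible unitary representations of Γ on H. Consequently, if Γ admits infinitely many pairwise inequivalent finite-dimensional irreducible representations ρₙ on Hilbert spaces Hₙ, they can be enumerated so that the dimensions mₙ = dim(Hₙ) form a nondecreasing sequence tending to infinity. -/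
open Filter Matrix

/-- `(F, ε)` is a Kazhdan pair for `Γ`. -/
def IsKazhdanPair (Γ : Type*) [Group Γ] (F : Finset Γ) (ε : ℝ) : Prop :=
  ∀ (H : Type) (_ : NormedAddCommGroup H) (_ : InnerProductSpace ℂ H) (_ : CompleteSpace H)
    (ρ : Γ →* (H ≃ₗᵢ[ℂ] H)) (ξ : H), ξ ≠ 0 →
    (∀ g ∈ F, ‖ρ g ξ - ξ‖ < ε * ‖ξ‖) →
    ∃ η : H, η ≠ 0 ∧ ∀ g : Γ, ρ g η = η

/-- `Γ` has property (T). -/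
def HasPropertyT (Γ : Type*) [Group Γ] : Prop :=
  ∃ (F : Finset Γ) (ε : ℝ), 0 < ε ∧ IsKazhdanPair Γ F ε

/-- Irreducibility of a finite-dimensional unitary representation (Schur commutant form). -/
def MatIrreducible {Γ : Type*} [Group Γ] {m : ℕ}
    (ρ : Γ →* Matrix.unitaryGroup (Fin m) ℂ) : Prop :=
  ∀ M : Matrix (Fin m) (Fin m) ℂ,
    (∀ g : Γ, (ρ g : Matrix (Fin m) (Fin m) ℂ) * M = M * (ρ g : Matrix (Fin m) (Fin m) ℂ)) →
    ∃ c : ℂ, M = c • (1 : Matrix (Fin m) (Fin m) ℂ)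

/-- Unitary equivalence of two finite-dimensional unitary representations, formulated via a
(possibly rectangular) unitary intertwiner. -/
def MatEquiv {Γ : Type*} [Group Γ] {m₁ m₂ : ℕ}
    (ρ₁ : Γ →* Matrix.unitaryGroup (Fin m₁) ℂ)
    (ρ₂ : Γ →* Matrix.unitaryGroup (Fin m₂) ℂ) : Prop :=
  ∃ U : Matrix (Fin m₂) (Fin m₁) ℂ, U * Uᴴ = 1 ∧ Uᴴ * U = 1 ∧
    ∀ g : Γ, U * (ρ₁ g : Matrix (Fin m₁) (Fin m₁) ℂ) = (ρ₂ g : Matrix (Fin m₂) (Fin m₂) ℂ) * U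

noncomputable section

variable {m : ℕ}

def toEuc {m : ℕ} : Matrix (Fin m) (Fin m) ℂ ≃ₗ[ℂ] EuclideanSpace ℂ (Fin m × Fin m) where
  toFun M := WithLp.toLp 2 (fun p : Fin m × Fin m => M p.1 p.2)
  invFun x := Matrix.of fun a b => x (a, b)
  map_add' _ _ := rfl
  map_smul' _ _ := rfl
  left_inv _ := rfl
  right_inv _ := rfl

lemma coe_star_mul (u : Matrix.unitaryGroup (Fin m) ℂ) :
    (u : Matrix (Fin m) (Fin m) ℂ)ᴴ * u = 1 := by
  rw [← Matrix.star_eq_conjTranspose]; exact u.2.1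

lemma coe_mul_star (u : Matrix.unitaryGroup (Fin m) ℂ) :
    (u : Matrix (Fin m) (Fin m) ℂ) * (u : Matrix (Fin m) (Fin m) ℂ)ᴴ = 1 := by
  rw [← Matrix.star_eq_conjTranspose]; exact u.2.2

def mulLR (A B : Matrix.unitaryGroup (Fin m) ℂ) :
    Matrix (Fin m) (Fin m) ℂ ≃ₗ[ℂ] Matrix (Fin m) (Fin m) ℂ where
  toFun M := A * M * (B : Matrix (Fin m) (Fin m) ℂ)ᴴ
  invFun M := (A : Matrix (Fin m) (Fin m) ℂ)ᴴ * M * B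
  map_add' M N := by noncomm_ring
  map_smul' c M := by
    simp [Matrix.mul_smul, Matrix.smul_mul]
  left_inv M := by
    simp only [Matrix.mul_assoc]
    rw [coe_star_mul, Matrix.mul_one, ← Matrix.mul_assoc, coe_star_mul, Matrix.one_mul]
  right_inv M := by
    simp only [Matrix.mul_assoc]
    rw [coe_mul_star, Matrix.mul_one, ← Matrix.mul_assoc, coe_mul_star, Matrix.one_mul]

lemma sum_sq_eq_trace (M : Matrix (Fin m) (Fin m) ℂ) :
    ((∑ p : Fin m × Fin m, ‖M p.1 p.2‖^2 : ℝ) : ℂ) = (Mᴴ * M).trace := by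
  rw [Matrix.trace]
  push_cast
  rw [Fintype.sum_prod_type]
  simp only [Matrix.diag_apply, Matrix.mul_apply, Matrix.conjTranspose_apply]
  rw [Finset.sum_comm]
  congr 1; ext a; congr 1; ext b
  rw [← Complex.conj_mul']
  rfl

lemma norm_toEuc (M : Matrix (Fin m) (Fin m) ℂ) :
    ‖toEuc M‖ = Real.sqrt (∑ p : Fin m × Fin m, ‖M p.1 p.2‖^2) := by
  rw [EuclideanSpace.norm_eq]
  rfl

lemma norm_toEuc_conj {A B M : Matrix (Fin m) (Fin m) ℂ} (hA : Aᴴ * A = 1) (hB : B * Bᴴ = 1) :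
    ‖toEuc (A * M * B)‖ = ‖toEuc M‖ := by
  rw [norm_toEuc, norm_toEuc]
  congr 1
  have : ((∑ p : Fin m × Fin m, ‖(A * M * B) p.1 p.2‖^2 : ℝ) : ℂ) =
      ((∑ p : Fin m × Fin m, ‖M p.1 p.2‖^2 : ℝ) : ℂ) := by
    rw [sum_sq_eq_trace, sum_sq_eq_trace]
    rw [show (A * M * B)ᴴ = Bᴴ * Mᴴ * Aᴴ by simp [Matrix.conjTranspose_mul, Matrix.mul_assoc]]
    rw [Matrix.trace_mul_comm (Bᴴ * Mᴴ * Aᴴ) (A * M * B)]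
    have h1 : A * M * B * (Bᴴ * Mᴴ * Aᴴ) = A * M * (B * Bᴴ) * (Mᴴ * Aᴴ) := by
      simp only [Matrix.mul_assoc]
    rw [h1, hB, Matrix.mul_one]
    have h2 : A * M * (Mᴴ * Aᴴ) = A * (M * Mᴴ) * Aᴴ := by simp only [Matrix.mul_assoc]
    rw [h2, Matrix.trace_mul_comm, ← Matrix.mul_assoc, ← Matrix.mul_assoc, hA, Matrix.one_mul,
      Matrix.trace_mul_comm]
  exact_mod_cast this

def matConj (A B : Matrix.unitaryGroup (Fin m) ℂ) :
    EuclideanSpace ℂ (Fin m × Fin m) ≃ₗᵢ[ℂ] EuclideanSpace ℂ (Fin m × Fin m) where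
  toLinearEquiv := (toEuc.symm.trans (mulLR A B)).trans toEuc
  norm_map' x := by
    show ‖toEuc ((A : Matrix (Fin m) (Fin m) ℂ) * toEuc.symm x * (B : Matrix (Fin m) (Fin m) ℂ)ᴴ)‖ = ‖x‖
    rw [norm_toEuc_conj (coe_star_mul A) (by
      rw [Matrix.conjTranspose_conjTranspose]; exact coe_star_mul B)]
    rw [toEuc.apply_symm_apply]

lemma matConj_apply (A B : Matrix.unitaryGroup (Fin m) ℂ) (x : EuclideanSpace ℂ (Fin m × Fin m)) :
    matConj A B x = toEuc ((A : Matrix (Fin m) (Fin m) ℂ) * toEuc.symm x * (B : Matrix (Fin m) (Fin m) ℂ)ᴴ) := rfl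

variable {Γ : Type*} [Group Γ]

def conjRep (ρ₁ ρ₂ : Γ →* Matrix.unitaryGroup (Fin m) ℂ) :
    Γ →* (EuclideanSpace ℂ (Fin m × Fin m) ≃ₗᵢ[ℂ] EuclideanSpace ℂ (Fin m × Fin m)) where
  toFun g := matConj (ρ₁ g) (ρ₂ g)
  map_one' := by
    ext x
    simp [matConj_apply]
  map_mul' g h := by
    apply LinearIsometryEquiv.ext
    intro x
    have hmul : ∀ (e f : EuclideanSpace ℂ (Fin m × Fin m) ≃ₗᵢ[ℂ] EuclideanSpace ℂ (Fin m × Fin m)),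
        (e * f) x = e (f x) := fun _ _ => rfl
    rw [hmul]
    have h1 : ((ρ₁ (g*h) : Matrix (Fin m) (Fin m) ℂ)) =
        (ρ₁ g : Matrix (Fin m) (Fin m) ℂ) * (ρ₁ h : Matrix (Fin m) (Fin m) ℂ) := by
      rw [_root_.map_mul]; rfl
    have h2 : ((ρ₂ (g*h) : Matrix (Fin m) (Fin m) ℂ)) =
        (ρ₂ g : Matrix (Fin m) (Fin m) ℂ) * (ρ₂ h : Matrix (Fin m) (Fin m) ℂ) := by
      rw [_root_.map_mul]; rfl
    simp only [matConj_apply, toEuc.symm_apply_apply, h1, h2, Matrix.conjTranspose_mul]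
    congr 1
    simp only [Matrix.mul_assoc]

lemma one_le_norm_toEuc {m : ℕ} (hm : 0 < m) (M : Matrix (Fin m) (Fin m) ℂ)
    (hM : ‖M ⟨0,hm⟩ ⟨0,hm⟩‖ = 1) : 1 ≤ ‖toEuc M‖ := by
  rw [norm_toEuc]
  rw [show (1:ℝ) = Real.sqrt 1 by simp]
  apply Real.sqrt_le_sqrt
  have := Finset.single_le_sum (f := fun p : Fin m × Fin m => ‖M p.1 p.2‖^2)
      (fun _ _ => sq_nonneg _) (Finset.mem_univ ((⟨0,hm⟩ : Fin m), (⟨0,hm⟩ : Fin m)))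
  simp only [hM] at this
  simpa using this

lemma sum_sq_pos_of_ne_zero {m : ℕ} {X : Matrix (Fin m) (Fin m) ℂ} (hX0 : X ≠ 0) :
    0 < ∑ p : Fin m × Fin m, ‖X p.1 p.2‖^2 := by
  rcases Function.ne_iff.1 hX0 with ⟨a, ha⟩
  rcases Function.ne_iff.1 ha with ⟨b, hab⟩
  have hab' : X a b ≠ 0 := by simpa using hab
  have h1 : 0 < ‖X a b‖^2 := pow_pos (norm_pos_iff.2 hab') 2
  have h2 := Finset.single_le_sum (f := fun p : Fin m × Fin m => ‖X p.1 p.2‖^2)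
      (fun _ _ => sq_nonneg _) (Finset.mem_univ (a, b))
  exact lt_of_lt_of_le h1 h2

lemma equiv_of_close {m : ℕ} (hm : 0 < m) {F : Finset Γ} {ε : ℝ}
    (hK : IsKazhdanPair Γ F ε)
    (ρ₁ ρ₂ : Γ →* Matrix.unitaryGroup (Fin m) ℂ)
    (h1 : MatIrreducible ρ₁) (h2 : MatIrreducible ρ₂)
    (hclose : ∀ g ∈ F,
      ‖toEuc ((ρ₁ g : Matrix (Fin m) (Fin m) ℂ) - (ρ₂ g : Matrix (Fin m) (Fin m) ℂ))‖ < ε) :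
    MatEquiv ρ₂ ρ₁ := by
  set ξ : EuclideanSpace ℂ (Fin m × Fin m) := toEuc (1 : Matrix (Fin m) (Fin m) ℂ) with hξdef
  have hone : (1 : Matrix (Fin m) (Fin m) ℂ) ≠ 0 := by
    intro h
    have := congrFun (congrFun h ⟨0, hm⟩) ⟨0, hm⟩
    simp [Matrix.one_apply] at this
  have hξ0 : ξ ≠ 0 := by
    intro h
    have h2 := congrArg toEuc.symm h
    rw [hξdef] at h2
    simp only [toEuc.symm_apply_apply, map_zero] at h2
    exact hone h2
  have hξnorm : 1 ≤ ‖ξ‖ := by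
    rw [hξdef]
    exact one_le_norm_toEuc hm _ (by simp [Matrix.one_apply])
  have halmost : ∀ g ∈ F, ‖(conjRep ρ₁ ρ₂) g ξ - ξ‖ < ε * ‖ξ‖ := by
    intro g hg
    have hnorm : ‖(conjRep ρ₁ ρ₂) g ξ - ξ‖ =
        ‖toEuc ((ρ₁ g : Matrix (Fin m) (Fin m) ℂ) - (ρ₂ g : Matrix (Fin m) (Fin m) ℂ))‖ := by
      have : (conjRep ρ₁ ρ₂) g ξ - ξ =
          toEuc ((1 : Matrix (Fin m) (Fin m) ℂ) *
            ((ρ₁ g : Matrix (Fin m) (Fin m) ℂ) - (ρ₂ g : Matrix (Fin m) (Fin m) ℂ))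
              * (ρ₂ g : Matrix (Fin m) (Fin m) ℂ)ᴴ) := by
        show matConj (ρ₁ g) (ρ₂ g) ξ - ξ = _
        rw [matConj_apply, hξdef, toEuc.symm_apply_apply, ← map_sub]
        congr 1
        rw [Matrix.one_mul, Matrix.sub_mul, Matrix.mul_one, coe_mul_star]
      rw [this, norm_toEuc_conj (by simp) (by
        rw [Matrix.conjTranspose_conjTranspose]; exact coe_star_mul (ρ₂ g))]
    rw [hnorm]
    have h₁ := hclose g hg
    have hε : 0 < ε := lt_of_le_of_lt (norm_nonneg _) h₁
    calc ‖toEuc ((ρ₁ g : Matrix (Fin m) (Fin m) ℂ) - (ρ₂ g : Matrix (Fin m) (Fin m) ℂ))‖ < ε := h₁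
      _ = ε * 1 := by ring
      _ ≤ ε * ‖ξ‖ := by nlinarith
  obtain ⟨η, hη0, hηinv⟩ := hK (EuclideanSpace ℂ (Fin m × Fin m)) inferInstance inferInstance inferInstance (conjRep ρ₁ ρ₂) ξ hξ0 halmost
  set X : Matrix (Fin m) (Fin m) ℂ := toEuc.symm η with hXdef
  have hX0 : X ≠ 0 := by
    intro h
    apply hη0
    have := congrArg toEuc h
    simpa [hXdef] using this
  have hfix : ∀ g : Γ, (ρ₁ g : Matrix (Fin m) (Fin m) ℂ) * X * (ρ₂ g : Matrix (Fin m) (Fin m) ℂ)ᴴ = X := by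
    intro g
    have := hηinv g
    have h2' : matConj (ρ₁ g) (ρ₂ g) η = η := this
    rw [matConj_apply] at h2'
    have := congrArg toEuc.symm h2'
    simpa [hXdef] using this
  have hint : ∀ g : Γ, (ρ₁ g : Matrix (Fin m) (Fin m) ℂ) * X = X * (ρ₂ g : Matrix (Fin m) (Fin m) ℂ) := by
    intro g
    have := congrArg (fun M => M * (ρ₂ g : Matrix (Fin m) (Fin m) ℂ)) (hfix g)
    rw [Matrix.mul_assoc (_ * X) _ _, coe_star_mul, Matrix.mul_one] at this
    exact this
  -- the two "Schur" matrices
  have hXB : ∀ g : Γ, X * (ρ₂ g : Matrix (Fin m) (Fin m) ℂ)ᴴ = (ρ₁ g : Matrix (Fin m) (Fin m) ℂ)ᴴ * X := by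
    intro g
    have := congrArg (fun M => (ρ₁ g : Matrix (Fin m) (Fin m) ℂ)ᴴ * M) (hfix g)
    rw [← Matrix.mul_assoc, ← Matrix.mul_assoc, coe_star_mul, Matrix.one_mul] at this
    exact this
  have hBX : ∀ g : Γ, (ρ₂ g : Matrix (Fin m) (Fin m) ℂ) * Xᴴ = Xᴴ * (ρ₁ g : Matrix (Fin m) (Fin m) ℂ) := by
    intro g
    have := congrArg Matrix.conjTranspose (hXB g)
    simpa [Matrix.conjTranspose_mul] using this
  obtain ⟨c, hc⟩ := h2 (Xᴴ * X) (by
    intro g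
    calc (ρ₂ g : Matrix (Fin m) (Fin m) ℂ) * (Xᴴ * X) = (Xᴴ * (ρ₁ g : Matrix (Fin m) (Fin m) ℂ)) * X := by
          rw [← Matrix.mul_assoc, hBX g]
      _ = Xᴴ * (X * (ρ₂ g : Matrix (Fin m) (Fin m) ℂ)) := by rw [Matrix.mul_assoc, hint g]
      _ = (Xᴴ * X) * (ρ₂ g : Matrix (Fin m) (Fin m) ℂ) := by rw [Matrix.mul_assoc])
  obtain ⟨c', hc'⟩ := h1 (X * Xᴴ) (by
    intro g
    calc (ρ₁ g : Matrix (Fin m) (Fin m) ℂ) * (X * Xᴴ) = (X * (ρ₂ g : Matrix (Fin m) (Fin m) ℂ)) * Xᴴ := by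
          rw [← Matrix.mul_assoc, hint g]
      _ = X * (Xᴴ * (ρ₁ g : Matrix (Fin m) (Fin m) ℂ)) := by rw [Matrix.mul_assoc, ← hBX g]
      _ = (X * Xᴴ) * (ρ₁ g : Matrix (Fin m) (Fin m) ℂ) := by rw [Matrix.mul_assoc])
  -- compute c via trace
  set s : ℝ := ∑ p : Fin m × Fin m, ‖X p.1 p.2‖^2 with hsdef
  have htrace : (s : ℂ) = c * m := by
    rw [sum_sq_eq_trace, hc, Matrix.trace_smul, Matrix.trace_one]
    simp [smul_eq_mul, Fintype.card_fin, mul_comm]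
  have htrace' : (s : ℂ) = c' * m := by
    rw [sum_sq_eq_trace, Matrix.trace_mul_comm, hc', Matrix.trace_smul, Matrix.trace_one]
    simp [smul_eq_mul, Fintype.card_fin, mul_comm]
  have hs_pos : 0 < s := sum_sq_pos_of_ne_zero hX0
  have hm' : (m : ℂ) ≠ 0 := by exact_mod_cast hm.ne'
  have hcc' : c' = c := (mul_right_cancel₀ hm' (htrace.symm.trans htrace')).symm
  set t : ℝ := s / m with htdef
  have hcs : c = ((t : ℝ) : ℂ) := by
    rw [htdef]
    push_cast
    rw [eq_div_iff hm']
    exact htrace.symm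
  have ht_pos : 0 < t := by positivity
  set r : ℝ := Real.sqrt t with hrdef
  have hr_pos : 0 < r := Real.sqrt_pos.2 ht_pos
  have hrr : r⁻¹ * r⁻¹ * t = 1 := by
    have hrt : r * r = t := Real.mul_self_sqrt ht_pos.le
    field_simp
    linarith
  refine ⟨((r⁻¹ : ℝ) : ℂ) • X, ?_, ?_, ?_⟩
  · have hXXH : X * Xᴴ = ((t : ℝ) : ℂ) • 1 := by rw [hc', hcc', hcs]
    rw [Matrix.conjTranspose_smul, Matrix.smul_mul, Matrix.mul_smul, hXXH, smul_smul, smul_smul]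
    have key : ((r⁻¹ : ℝ) : ℂ) * star ((r⁻¹ : ℝ) : ℂ) * ((t : ℝ) : ℂ) = 1 := by
      rw [Complex.star_def, Complex.conj_ofReal]
      exact_mod_cast hrr
    rw [key, one_smul]
  · have hXHX : Xᴴ * X = ((t : ℝ) : ℂ) • 1 := by rw [hc, hcs]
    rw [Matrix.conjTranspose_smul, Matrix.smul_mul, Matrix.mul_smul, hXHX, smul_smul, smul_smul]
    have key : star ((r⁻¹ : ℝ) : ℂ) * ((r⁻¹ : ℝ) : ℂ) * ((t : ℝ) : ℂ) = 1 := by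
      rw [Complex.star_def, Complex.conj_ofReal]
      exact_mod_cast hrr
    rw [key, one_smul]
  · intro g
    rw [Matrix.smul_mul, Matrix.mul_smul, ← hint g]

lemma norm_toEuc_unitary (u : Matrix.unitaryGroup (Fin m) ℂ) :
    ‖toEuc (u : Matrix (Fin m) (Fin m) ℂ)‖ = Real.sqrt m := by
  rw [norm_toEuc]
  congr 1
  have h : ((∑ p : Fin m × Fin m, ‖(u : Matrix (Fin m) (Fin m) ℂ) p.1 p.2‖^2 : ℝ) : ℂ)
      = ((m : ℝ) : ℂ) := by
    rw [sum_sq_eq_trace, coe_star_mul]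
    simp
  exact_mod_cast h

lemma no_infinite_family {m : ℕ} {F : Finset Γ} {ε : ℝ} (hε : 0 < ε)
    (hK : IsKazhdanPair Γ F ε) :
    ¬ ∃ ρseq : ℕ → (Γ →* Matrix.unitaryGroup (Fin m) ℂ),
      (∀ n, MatIrreducible (ρseq n)) ∧ ∀ i j, i ≠ j → ¬ MatEquiv (ρseq i) (ρseq j) := by
  rintro ⟨ρseq, hirr, hpair⟩
  rcases Nat.eq_zero_or_pos m with hm | hm
  · subst hm
    apply hpair 0 1 (by norm_num)
    have hsub : ∀ A B : Matrix (Fin 0) (Fin 0) ℂ, A = B := by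
      intro A B; ext i j; exact i.elim0
    exact ⟨0, hsub _ _, hsub _ _, fun g => hsub _ _⟩
  · set T := EuclideanSpace ℂ (Fin m × Fin m)
    set Φ : ℕ → (F → T) := fun n g => toEuc ((ρseq n (g : Γ) : Matrix (Fin m) (Fin m) ℂ))
      with hΦdef
    have hball : ∀ n, Φ n ∈ Metric.closedBall (0 : F → T) (Real.sqrt m) := by
      intro n
      rw [Metric.mem_closedBall, dist_zero_right]
      refine (pi_norm_le_iff_of_nonneg (Real.sqrt_nonneg _)).2 fun g => ?_
      rw [hΦdef]
      exact le_of_eq (norm_toEuc_unitary _)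
    obtain ⟨x, -, φ, hφmono, hφtend⟩ :=
      (isCompact_closedBall (0 : F → T) (Real.sqrt m)).tendsto_subseq hball
    rw [Metric.tendsto_atTop] at hφtend
    obtain ⟨N, hN⟩ := hφtend (ε/2) (by linarith)
    set i := φ N with hi
    set j := φ (N+1) with hj
    have hij : j ≠ i := (hφmono (Nat.lt_succ_self N)).ne'
    have hdist : dist (Φ i) (Φ j) < ε := by
      calc dist (Φ i) (Φ j) ≤ dist (Φ i) x + dist (Φ j) x := dist_triangle_right _ _ _
        _ < ε/2 + ε/2 := add_lt_add (hN N le_rfl) (hN (N+1) (Nat.le_succ N))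
        _ = ε := by ring
    have hclose : ∀ g ∈ F,
        ‖toEuc ((ρseq i g : Matrix (Fin m) (Fin m) ℂ)
          - (ρseq j g : Matrix (Fin m) (Fin m) ℂ))‖ < ε := by
      intro g hg
      have h1 : toEuc ((ρseq i g : Matrix (Fin m) (Fin m) ℂ)
          - (ρseq j g : Matrix (Fin m) (Fin m) ℂ)) = Φ i ⟨g, hg⟩ - Φ j ⟨g, hg⟩ := by
        rw [map_sub, hΦdef]
      rw [h1]
      calc ‖Φ i ⟨g, hg⟩ - Φ j ⟨g, hg⟩‖ = ‖(Φ i - Φ j) ⟨g, hg⟩‖ := by rw [Pi.sub_apply]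
        _ ≤ ‖Φ i - Φ j‖ := norm_le_pi_norm _ _
        _ = dist (Φ i) (Φ j) := (dist_eq_norm _ _).symm
        _ < ε := hdist
    exact hpair j i hij
      (equiv_of_close hm hK (ρseq i) (ρseq j) (hirr i) (hirr j) hclose)

def castRep {a b : ℕ} (h : a = b) (σ : Γ →* Matrix.unitaryGroup (Fin a) ℂ) :
    Γ →* Matrix.unitaryGroup (Fin b) ℂ := h ▸ σ

lemma castRep_irr {a b : ℕ} (h : a = b) (σ : Γ →* Matrix.unitaryGroup (Fin a) ℂ)
    (hσ : MatIrreducible σ) : MatIrreducible (castRep h σ) := by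
  subst h; exact hσ

lemma castRep_equiv {a b a' b' : ℕ} (h : a = b) (h' : a' = b')
    (σ : Γ →* Matrix.unitaryGroup (Fin a) ℂ) (σ' : Γ →* Matrix.unitaryGroup (Fin a') ℂ)
    (hE : MatEquiv (castRep h σ) (castRep h' σ')) : MatEquiv σ σ' := by
  subst h; subst h'; exact hE

end

lemma exists_sorting_equiv (d : ℕ → ℕ) (hfin : ∀ k, {n | d n ≤ k}.Finite) :
    ∃ e : ℕ ≃ ℕ, Monotone (fun n => d (e n)) ∧
      Filter.Tendsto (fun n => d (e n)) Filter.atTop Filter.atTop := by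
  classical
  set κ : ℕ → ℕ ×ₗ ℕ := fun n => toLex (d n, n) with hκdef
  have hκ : Function.Injective κ := by
    intro a b h
    have := congrArg (fun x => (ofLex x).2) h
    simpa [hκdef] using this
  set s : Set (ℕ ×ₗ ℕ) := Set.range κ with hsdef
  have hIcc : ∀ a b : ↥s, (Set.Icc a b).Finite := by
    intro a b
    obtain ⟨nb, hnb⟩ := b.2
    have hsub : Set.Icc a b ⊆
        (fun n : ℕ => (⟨κ n, Set.mem_range_self n⟩ : ↥s)) '' {n | d n ≤ d nb} := by
      rintro ⟨x, hx⟩ ⟨-, hxb⟩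
      obtain ⟨n, rfl⟩ := hx
      refine ⟨n, ?_, rfl⟩
      have hle : κ n ≤ κ nb := by
        rw [hnb]
        exact_mod_cast hxb
      rcases Prod.Lex.le_iff.1 hle with h | h
      · exact le_of_lt h
      · exact le_of_eq h.1
    exact (((hfin (d nb)).image _).subset hsub)
  letI : LocallyFiniteOrder ↥s := LocallyFiniteOrder.ofFiniteIcc hIcc
  haveI : NoMaxOrder ↥s := by
    constructor
    rintro ⟨x, hx⟩
    obtain ⟨n, rfl⟩ := hx
    have : ∃ n', d n < d n' := by
      by_contra h
      push_neg at h
      have huniv : (Set.univ : Set ℕ).Finite := (hfin (d n)).subset (fun a _ => h a)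
      exact Set.infinite_univ huniv
    obtain ⟨n', hn'⟩ := this
    refine ⟨⟨κ n', Set.mem_range_self n'⟩, ?_⟩
    have : κ n < κ n' := Prod.Lex.lt_iff.2 (Or.inl hn')
    exact Subtype.coe_lt_coe.1 this
  obtain ⟨b0, hb0s, hb0min⟩ := (wellFounded_lt (α := ℕ ×ₗ ℕ)).has_min s ⟨κ 0, Set.mem_range_self 0⟩
  letI : OrderBot ↥s :=
    { bot := ⟨b0, hb0s⟩
      bot_le := fun x => not_lt.1 fun hlt => hb0min x.1 x.2 (Subtype.coe_lt_coe.2 hlt) }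
  letI : SuccOrder ↥s := LinearLocallyFiniteOrder.succOrder (ι := ↥s)
  letI : PredOrder ↥s := LinearLocallyFiniteOrder.predOrder (ι := ↥s)
  haveI : IsSuccArchimedean ↥s := inferInstance
  let eiso : ↥s ≃o ℕ := orderIsoNatOfLinearSuccPredArch
  let E : ℕ ≃ ℕ := (Equiv.ofInjective κ hκ).trans eiso.toEquiv
  have hEle : ∀ a b : ℕ, E a ≤ E b ↔ κ a ≤ κ b := by
    intro a b
    constructor
    · intro h
      have h2 : (Equiv.ofInjective κ hκ a : ↥s) ≤ Equiv.ofInjective κ hκ b :=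
        eiso.le_iff_le.1 h
      simpa using Subtype.coe_le_coe.2 h2
    · intro h
      apply eiso.le_iff_le.2
      exact Subtype.coe_le_coe.1 (by simpa using h)
  refine ⟨E.symm, ?_, ?_⟩
  · intro n n' hnn'
    have h1 : E (E.symm n) ≤ E (E.symm n') := by
      rw [E.apply_symm_apply, E.apply_symm_apply]; exact hnn'
    have h2 : κ (E.symm n) ≤ κ (E.symm n') := (hEle _ _).1 h1
    rcases Prod.Lex.le_iff.1 h2 with h | h
    · exact le_of_lt h
    · exact le_of_eq h.1
  · rw [Filter.tendsto_atTop]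
    intro k
    have hbad : (E '' {a | d a < k}).Finite :=
      ((hfin k).subset (fun a (ha : d a < k) => le_of_lt ha)).image E
    obtain ⟨N, hN⟩ := hbad.bddAbove
    rw [Filter.eventually_atTop]
    refine ⟨N + 1, fun n hn => ?_⟩
    by_contra h
    push_neg at h
    have : n ∈ E '' {a | d a < k} := ⟨E.symm n, h, E.apply_symm_apply n⟩
    have := hN this
    omega

set_option maxHeartbeats 1000000 in
/-- A finitely generated property (T) group has only finitely many pairwise inequivalent
irreducible unitary representations in each finite dimension; consequently any infinite
family of pairwise inequivalent finite-dimensional irreducible representations can be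
enumerated with nondecreasing dimensions tending to infinity. -/
theorem propertyT_finitely_many_irreps_each_dim {Γ : Type*} [Group Γ]
    (hFG : Group.FG Γ) (hT : HasPropertyT Γ) :
    (∀ m : ℕ, ¬ ∃ ρseq : ℕ → (Γ →* Matrix.unitaryGroup (Fin m) ℂ),
        (∀ n, MatIrreducible (ρseq n)) ∧
        ∀ i j, i ≠ j → ¬ MatEquiv (ρseq i) (ρseq j)) ∧
    (∀ (d : ℕ → ℕ) (_ : ∀ n, 0 < d n)
        (ρ : (n : ℕ) → Γ →* Matrix.unitaryGroup (Fin (d n)) ℂ),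
      (∀ n, MatIrreducible (ρ n)) →
      (∀ i j, i ≠ j → ¬ MatEquiv (ρ i) (ρ j)) →
      ∃ e : ℕ ≃ ℕ, Monotone (fun n => d (e n)) ∧
        Tendsto (fun n => d (e n)) atTop atTop) := by
  obtain ⟨F, ε, hε, hK⟩ := hT
  constructor
  · intro m
    exact no_infinite_family hε hK
  · intro d hd ρ hirr hpair
    have hfib : ∀ k, {n | d n = k}.Finite := by
      intro k
      by_contra hinf
      have hinf' : {n | d n = k}.Infinite := hinf
      let f := hinf'.natEmbedding
      refine no_infinite_family hε hK (m := k)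
        ⟨fun t => castRep (f t).2 (ρ (f t).1), fun t => castRep_irr _ _ (hirr _), ?_⟩
      intro i j hij hEq
      exact hpair (f i).1 (f j).1
        (fun hv => hij (f.injective (Subtype.ext hv)))
        (castRep_equiv _ _ _ _ hEq)
    have hbdd : ∀ k, {n | d n ≤ k}.Finite := by
      intro k
      refine ((Set.finite_Iic k).biUnion (fun i _ => hfib i)).subset ?_
      intro n hn
      exact Set.mem_biUnion (Set.mem_Iic.2 hn) rfl
    exact exists_sorting_equiv d hbdd
end
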